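/- arXiv:1610.05250 — 5 statements merged into one kernel-verified Lean document; each statement's English description precedes it below -/
import Mathlib

section
/- For every even integer n ≥ 4, the upper broadcast domination number of the cycle C_n equals n − 2: Γ_b(C_n) = n − 2. -/
open SimpleGraph Finset
open scoped Fin.NatCast Fin.IntCast Fin.CommRing

/-- `S` is a dominating set of `G`: every vertex is in `S` or adjacent to a vertex of `S`. -/
def Dominates {V : Type*} (G : SimpleGraph V) (S : Finset V) : Prop :=
  ∀ v : V, v ∈ S ∨ ∃ u ∈ S, G.Adj v u

/-- `S` is a minimal dominating set: it dominates and no proper subset dominates. -/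
def MinimalDominating {V : Type*} (G : SimpleGraph V) (S : Finset V) : Prop :=
  Dominates G S ∧ ∀ S' : Finset V, S' ⊂ S → ¬ Dominates G S'

/-- The upper domination number `Γ(G)`: maximum cardinality of a minimal dominating set. -/
noncomputable def upperDomination {V : Type*} (G : SimpleGraph V) : ℕ :=
  sSup {k : ℕ | ∃ S : Finset V, MinimalDominating G S ∧ S.card = k}

/-- The domination number `γ(G)`: minimum cardinality of a dominating set. -/
noncomputable def domNumber {V : Type*} (G : SimpleGraph V) : ℕ :=
  sInf {k : ℕ | ∃ S : Finset V, Dominates G S ∧ S.card = k}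

/-- The eccentricity of `v` : maximum distance to any other vertex. -/
noncomputable def eccent {V : Type*} [Fintype V] (G : SimpleGraph V) (v : V) : ℕ :=
  Finset.univ.sup (fun u => G.dist v u)

/-- The diameter of `G` : maximum eccentricity. -/
noncomputable def gDiam {V : Type*} [Fintype V] (G : SimpleGraph V) : ℕ :=
  Finset.univ.sup (fun v => eccent G v)

/-- A broadcast on `G`: `f v ≤ e(v)` for all `v`. -/
def IsBroadcast {V : Type*} [Fintype V] (G : SimpleGraph V) (f : V → ℕ) : Prop :=
  ∀ v : V, f v ≤ _root_.eccent G v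

/-- A broadcast `f` dominates `G` if every vertex hears some broadcasting vertex. -/
def BroadcastDominates {V : Type*} (G : SimpleGraph V) (f : V → ℕ) : Prop :=
  ∀ u : V, ∃ v : V, 1 ≤ f v ∧ G.dist u v ≤ f v

/-- A minimal dominating broadcast: no broadcast `g ≤ f` with `g ≠ f` dominates `G`. -/
def MinimalDominatingBroadcast {V : Type*} [Fintype V] (G : SimpleGraph V) (f : V → ℕ) : Prop :=
  IsBroadcast G f ∧ BroadcastDominates G f ∧
    ∀ g : V → ℕ, IsBroadcast G g → g ≤ f → g ≠ f → ¬ BroadcastDominates G g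

/-- The cost of a broadcast. -/
def cost {V : Type*} [Fintype V] (f : V → ℕ) : ℕ := ∑ v, f v

/-- The upper broadcast domination number `Γ_b(G)`. -/
noncomputable def upperBroadcast {V : Type*} [Fintype V] (G : SimpleGraph V) : ℕ :=
  sSup {k : ℕ | ∃ f : V → ℕ, MinimalDominatingBroadcast G f ∧ cost f = k}

/-- The broadcast domination number `γ_b(G)`. -/
noncomputable def broadcastDomNumber {V : Type*} [Fintype V] (G : SimpleGraph V) : ℕ :=
  sInf {k : ℕ | ∃ f : V → ℕ, IsBroadcast G f ∧ BroadcastDominates G f ∧ cost f = k}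


section helpers
variable {n : ℕ} [NeZero n]

omit [NeZero n] in
lemma fin_sub_val (x y : Fin n) :
    (x - y).val + y.val = x.val ∨ (x - y).val + y.val = n + x.val := by
  have hx := x.is_lt
  have hy := y.is_lt
  have h0 : (x - y).val = (n - y.val + x.val) % n := by rw [Fin.sub_def]
  rcases le_or_gt y.val x.val with h | h
  · left
    have h2 : n - y.val + x.val = n + (x.val - y.val) := by omega
    rw [h2, Nat.add_mod_left, Nat.mod_eq_of_lt (by omega)] at h0
    omega
  · right
    rw [Nat.mod_eq_of_lt (by omega)] at h0
    omega

lemma fin_one_val (hn : 2 ≤ n) : (1 : Fin n).val = 1 := by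
  rw [Fin.val_one']
  exact Nat.mod_eq_of_lt (by omega)

lemma fin_succ_val (hn : 2 ≤ n) (x : Fin n) :
    (x + 1).val = x.val + 1 ∨ (x + 1).val + n = x.val + 1 := by
  have h := fin_sub_val (x + 1) x
  have h2 : x + 1 - x = 1 := by ring
  rw [h2, fin_one_val hn] at h
  omega

lemma cycle_adj' {u v : Fin n} (hn : 2 ≤ n) (h : (cycleGraph n).Adj u v) :
    v = u + 1 ∨ u = v + 1 := by
  rw [cycleGraph_adj'] at h
  rcases h with h | h
  · right
    have h2 : ((u - v).val : Fin n) = ((1:ℕ) : Fin n) := by rw [h]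
    rw [Fin.cast_val_eq_self, Nat.cast_one] at h2
    rw [← h2]; ring
  · left
    have h2 : ((v - u).val : Fin n) = ((1:ℕ) : Fin n) := by rw [h]
    rw [Fin.cast_val_eq_self, Nat.cast_one] at h2
    rw [← h2]; ring

lemma walk_length_ge (hn : 2 ≤ n) {u v : Fin n} (p : (cycleGraph n).Walk u v) :
    min (u - v).val (v - u).val ≤ p.length := by
  induction p with
  | nil => simp [sub_self]
  | @cons a b c hadj q ih =>
    have h1 := fin_sub_val a c
    have h2 := fin_sub_val c a
    have h3 := fin_sub_val b c
    have h4 := fin_sub_val c b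
    have ha := (a - c).is_lt
    have hb := (c - a).is_lt
    have hc := (b - c).is_lt
    have hd := (c - b).is_lt
    have hav := a.is_lt
    have hbv := b.is_lt
    have hcv := c.is_lt
    rw [Walk.length_cons]
    rcases cycle_adj' hn hadj with h | h
    · have h5 := fin_succ_val hn a
      rw [← h] at h5
      omega
    · have h5 := fin_succ_val hn b
      rw [← h] at h5
      omega

lemma dist_add_nat (hn : 2 ≤ n) (u : Fin n) (k : ℕ) :
    (cycleGraph n).dist u (u + (k : Fin n)) ≤ k := by
  induction k with
  | zero => simp
  | succ k ih =>
    have hadj : (cycleGraph n).Adj (u + (k : Fin n)) (u + ((k+1 : ℕ) : Fin n)) := by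
      rw [cycleGraph_adj']
      right
      have h2 : u + ((k+1 : ℕ) : Fin n) - (u + (k : Fin n)) = 1 := by
        push_cast
        ring
      rw [h2, fin_one_val hn]
    calc (cycleGraph n).dist u (u + ((k+1:ℕ) : Fin n))
        ≤ (cycleGraph n).dist u (u + (k : Fin n)) + (cycleGraph n).dist (u + (k:Fin n)) (u + ((k+1:ℕ):Fin n)) := by
          apply Connected.dist_triangle
          obtain ⟨m, hm⟩ : ∃ m, n = m + 1 := ⟨n - 1, by omega⟩
          subst hm
          exact cycleGraph_connected
      _ ≤ k + 1 := by
          refine Nat.add_le_add ih ?_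
          calc (cycleGraph n).dist _ _ ≤ hadj.toWalk.length := SimpleGraph.dist_le _
            _ = 1 := by simp [Adj.toWalk]

lemma dist_cycle (hn : 2 ≤ n) (u v : Fin n) :
    (cycleGraph n).dist u v = min (u - v).val (v - u).val := by
  have hconn : (cycleGraph n).Connected := by
    obtain ⟨m, hm⟩ : ∃ m, n = m + 1 := ⟨n - 1, by omega⟩
    subst hm
    exact cycleGraph_connected
  apply le_antisymm
  · apply le_min
    · have h := dist_add_nat hn v ((u - v).val)
      rw [Fin.cast_val_eq_self] at h
      have h2 : v + (u - v) = u := by ring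
      rw [h2] at h
      rw [SimpleGraph.dist_comm]
      exact h
    · have h := dist_add_nat hn u ((v - u).val)
      rw [Fin.cast_val_eq_self] at h
      have h2 : u + (v - u) = v := by ring
      rw [h2] at h
      exact h
  · obtain ⟨p, hp⟩ := (hconn u v).exists_walk_length_eq_dist
    rw [← hp]
    exact walk_length_ge hn p

end helpers

section helpers2
variable {n : ℕ} [NeZero n]

lemma fin_sub_val' (x y : Fin n) :
    (x - y).val + y.val = x.val ∨ (x - y).val + y.val = n + x.val := by
  have hx := x.is_lt
  have hy := y.is_lt
  have h0 : (x - y).val = (n - y.val + x.val) % n := by rw [Fin.sub_def]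
  rcases le_or_gt y.val x.val with h | h
  · left
    have h2 : n - y.val + x.val = n + (x.val - y.val) := by omega
    rw [h2, Nat.add_mod_left, Nat.mod_eq_of_lt (by omega)] at h0
    omega
  · right
    rw [Nat.mod_eq_of_lt (by omega)] at h0
    omega

lemma dmin_le_half (x y : Fin n) : min (x - y).val (y - x).val ≤ n / 2 := by
  have h1 := fin_sub_val' x y
  have h2 := fin_sub_val' y x
  have := (x - y).is_lt
  have := (y - x).is_lt
  have := x.is_lt
  have := y.is_lt
  omega

lemma exists_int_rep (x v : Fin n) (r : ℕ)
    (h : min ((x - v).val) ((v - x).val) ≤ r) :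
    ∃ a : ℤ, a.natAbs ≤ r ∧ x = v + (a : Fin n) := by
  rcases min_le_iff.mp h with h' | h'
  · refine ⟨((x - v).val : ℤ), by simpa using h', ?_⟩
    rw [Int.cast_natCast, Fin.cast_val_eq_self]
    ring
  · refine ⟨-((v - x).val : ℤ), by simpa using h', ?_⟩
    rw [Int.cast_neg, Int.cast_natCast, Fin.cast_val_eq_self]
    rw [neg_sub]
    ring

lemma dmin_int_le (v : Fin n) (c : ℤ) :
    min ((v + (c : Fin n) - v).val) ((v - (v + (c : Fin n))).val) ≤ c.natAbs := by
  rcases le_or_gt 0 c with h | h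
  · obtain ⟨k, rfl⟩ : ∃ k : ℕ, c = (k : ℤ) := ⟨c.natAbs, by omega⟩
    have h1 : v + (((k : ℤ)) : Fin n) - v = ((k : ℕ) : Fin n) := by push_cast; ring
    refine le_trans (min_le_left _ _) ?_
    rw [h1, Fin.val_natCast, Int.natAbs_natCast]
    exact Nat.mod_le _ _
  · obtain ⟨k, rfl⟩ : ∃ k : ℕ, c = -(k : ℤ) := ⟨c.natAbs, by omega⟩
    rw [Int.cast_neg, Int.cast_natCast]
    have h2 : v - (v + -((k : ℕ) : Fin n)) = ((k : ℕ) : Fin n) := by ring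
    refine le_trans (min_le_right _ _) ?_
    rw [h2, Fin.val_natCast, Int.natAbs_neg, Int.natAbs_natCast]
    exact Nat.mod_le _ _

lemma pair_contra (fj : ℕ) (x vj pi : Fin n) (aj bj ti : ℤ)
    (hxj : x = vj + (aj : Fin n)) (hajn : aj.natAbs ≤ fj) (hbjn : bj.natAbs ≤ fj)
    (hpi : pi = x + (ti : Fin n))
    (hbet : (0 ≤ ti ∧ ti ≤ bj - aj) ∨ (bj - aj ≤ ti ∧ ti ≤ 0)) :
    min ((pi - vj).val) ((vj - pi).val) ≤ fj := by
  have h1 : pi = vj + ((aj + ti : ℤ) : Fin n) := by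
    rw [hpi, hxj]; push_cast; ring
  have h2 : (aj + ti).natAbs ≤ fj := by omega
  rw [h1]
  exact le_trans (dmin_int_le vj (aj + ti)) h2

lemma ball_card (v : Fin n) (r : ℕ) (h1 : 2 * r + 1 ≤ n) :
    (univ.filter fun x : Fin n => min ((x - v).val) ((v - x).val) ≤ r).card = 2 * r + 1 := by
  have key : (univ.filter fun x : Fin n => min ((x - v).val) ((v - x).val) ≤ r)
      = (Finset.range (2*r+1)).image (fun j : ℕ => v + (j : Fin n) - (r : Fin n)) := by
    ext x
    simp only [Finset.mem_filter, Finset.mem_univ, true_and, Finset.mem_image,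
      Finset.mem_range]
    constructor
    · intro hx
      rcases min_le_iff.mp hx with hA | hB
      · refine ⟨(x - v).val + r, by omega, ?_⟩
        push_cast
        ring
      · refine ⟨r - (v - x).val, by omega, ?_⟩
        have hcast : ((r - (v - x).val : ℕ) : Fin n) = (r : Fin n) - ((v - x).val : Fin n) := by
          have h3 : ((r - (v - x).val : ℕ) : Fin n) + ((v - x).val : Fin n) = (r : Fin n) := by
            rw [← Nat.cast_add]
            congr 1
            omega
          exact eq_sub_of_add_eq h3
        rw [hcast, Fin.cast_val_eq_self]
        ring
    · rintro ⟨j, hj, rfl⟩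
      rcases le_or_gt r j with h | h
      · have h3 : v + (j : Fin n) - (r : Fin n) - v = ((j - r : ℕ) : Fin n) := by
          have h4 : ((j - r : ℕ) : Fin n) + (r : Fin n) = (j : Fin n) := by
            rw [← Nat.cast_add]; congr 1; omega
          rw [← h4]; ring
        refine le_trans (min_le_left _ _) ?_
        rw [h3, Fin.val_natCast]
        calc (j - r) % n ≤ j - r := Nat.mod_le _ _
          _ ≤ r := by omega
      · have h3 : v - (v + (j : Fin n) - (r : Fin n)) = ((r - j : ℕ) : Fin n) := by
          have h4 : ((r - j : ℕ) : Fin n) + (j : Fin n) = (r : Fin n) := by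
            rw [← Nat.cast_add]; congr 1; omega
          rw [← h4]; ring
        refine le_trans (min_le_right _ _) ?_
        rw [h3, Fin.val_natCast]
        calc (r - j) % n ≤ r - j := Nat.mod_le _ _
          _ ≤ r := by omega
  rw [key, Finset.card_image_of_injOn, Finset.card_range]
  intro i hi j hj hij
  simp only [Finset.coe_range, Set.mem_Iio] at hi hj
  have h2 : (i : Fin n) = (j : Fin n) := by
    have hij' : v + (i : Fin n) - (r : Fin n) = v + (j : Fin n) - (r : Fin n) := hij
    have h3 : v + (i : Fin n) - (r : Fin n) + (r : Fin n) - v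
        = v + (j : Fin n) - (r : Fin n) + (r : Fin n) - v := by rw [hij']
    calc (i : Fin n) = v + (i : Fin n) - (r : Fin n) + (r : Fin n) - v := by ring
      _ = v + (j : Fin n) - (r : Fin n) + (r : Fin n) - v := h3
      _ = (j : Fin n) := by ring
  have h4 := congrArg Fin.val h2
  rw [Fin.val_natCast, Fin.val_natCast, Nat.mod_eq_of_lt (by omega),
    Nat.mod_eq_of_lt (by omega)] at h4
  exact h4

end helpers2

section main
variable {n : ℕ}

lemma cost_le_of_minimal (hn : 4 ≤ n) (hev : Even n) (f : Fin n → ℕ)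
    (hf : MinimalDominatingBroadcast (cycleGraph n) f) : cost f ≤ n - 2 := by
  haveI : NeZero n := ⟨by omega⟩
  have hn2 : 2 ≤ n := by omega
  obtain ⟨m, hm⟩ := hev
  have hm2 : 2 ≤ m := by omega
  -- private vertices
  have hpriv : ∀ v : Fin n, ∃ w : Fin n, 1 ≤ f v →
      (min ((w - v).val) ((v - w).val) ≤ f v ∧
        ∀ u, u ≠ v → 1 ≤ f u → f u < min ((w - u).val) ((u - w).val)) := by
    intro v
    by_cases hv : 1 ≤ f v
    · set g : Fin n → ℕ := fun u => if u = v then f v - 1 else f u with hg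
      have hgv : g v = f v - 1 := by rw [hg]; simp
      have hgu : ∀ u, u ≠ v → g u = f u := by
        intro u hu
        rw [hg]
        simp [hu]
      have hgb : IsBroadcast (cycleGraph n) g := by
        intro u
        rcases eq_or_ne u v with rfl | h
        · rw [hgv]
          exact le_trans (Nat.sub_le _ _) (hf.1 u)
        · rw [hgu u h]
          exact hf.1 u
      have hgle : g ≤ f := by
        intro u
        rcases eq_or_ne u v with rfl | h
        · rw [hgv]
          exact Nat.sub_le _ _
        · rw [hgu u h]
      have hgne : g ≠ f := by
        intro hgf
        have h2 := congrFun hgf v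
        rw [hgv] at h2
        omega
      have hnd := hf.2.2 g hgb hgle hgne
      simp only [BroadcastDominates, not_forall, not_exists, not_and, not_le] at hnd
      obtain ⟨w, hw⟩ := hnd
      refine ⟨w, fun _ => ⟨?_, ?_⟩⟩
      · obtain ⟨z, hz1, hz2⟩ := hf.2.1 w
        rcases eq_or_ne z v with rfl | hzv
        · rw [dist_cycle hn2] at hz2
          exact hz2
        · exfalso
          have h3 := hw z
          rw [hgu z hzv] at h3
          exact absurd hz2 (not_le.mpr (h3 hz1))
      · intro u hu hfu
        have h3 := hw u
        rw [hgu u hu] at h3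
        rw [← dist_cycle hn2]
        exact h3 hfu
    · exact ⟨v, fun h => absurd h hv⟩
  choose p hp using hpriv
  set B : Finset (Fin n) := univ.filter (fun v => 1 ≤ f v) with hB
  have hmemB : ∀ v : Fin n, v ∈ B ↔ 1 ≤ f v := by
    intro v; simp [hB]
  have hcost : cost f = ∑ v ∈ B, f v := by
    rw [cost]
    refine (Finset.sum_subset (Finset.subset_univ B) ?_).symm
    intro x _ hx
    rw [hmemB] at hx
    omega
  have hBne : B.Nonempty := by
    obtain ⟨v, hv1, _⟩ := hf.2.1 ⟨0, by omega⟩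
    exact ⟨v, (hmemB v).mpr hv1⟩
  -- eccentricity bound
  have hecc : ∀ v : Fin n, _root_.eccent (cycleGraph n) v ≤ n / 2 := by
    intro v
    refine Finset.sup_le ?_
    intro u _
    rw [dist_cycle hn2]
    exact dmin_le_half v u
  rcases eq_or_lt_of_le (Finset.one_le_card.mpr hBne) with hk1 | hk2
  · -- single broadcaster
    obtain ⟨v, hv⟩ := Finset.card_eq_one.mp hk1.symm
    rw [hcost, hv, Finset.sum_singleton]
    have := le_trans (hf.1 v) (hecc v)
    omega
  · -- at least two broadcasters
    have hr : ∀ v ∈ B, f v ≤ m - 1 := by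
      intro v hv
      obtain ⟨u, hu, huv⟩ := Finset.exists_mem_ne hk2 v
      have h1 := ((hp u ((hmemB u).mp hu)).2 v (fun h => huv h.symm) ((hmemB v).mp hv))
      have h2 := dmin_le_half (p u) v
      omega
    -- the counting function
    set c : Fin n → ℕ :=
      fun x => (B.filter (fun v => min ((x - v).val) ((v - x).val) ≤ f v)).card with hc
    have hsum : ∑ x : Fin n, c x = ∑ v ∈ B, (2 * f v + 1) := by
      simp only [hc, Finset.card_filter]
      rw [Finset.sum_comm]
      refine Finset.sum_congr rfl ?_
      intro v hv
      have h1 : (2 : ℕ) * f v + 1 ≤ n := by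
        have := hr v hv
        omega
      rw [← ball_card v (f v) h1, Finset.card_filter]
    -- each vertex in at most two balls
    have hc2 : ∀ x : Fin n, c x ≤ 2 := by
      intro x
      by_contra hcon
      push_neg at hcon
      set S := B.filter (fun v => min ((x - v).val) ((v - x).val) ≤ f v) with hS
      have hlink : c x = S.card := rfl
      obtain ⟨v1, hv1⟩ := Finset.card_pos.mp (by omega : 0 < S.card)
      have h2 : 0 < (S.erase v1).card := by
        rw [Finset.card_erase_of_mem hv1]; omega
      obtain ⟨v2, hv2⟩ := Finset.card_pos.mp h2
      have h3 : 0 < ((S.erase v1).erase v2).card := by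
        rw [Finset.card_erase_of_mem hv2, Finset.card_erase_of_mem hv1]; omega
      obtain ⟨v3, hv3⟩ := Finset.card_pos.mp h3
      have hne21 : v2 ≠ v1 := (Finset.mem_erase.mp hv2).1
      have hne32 : v3 ≠ v2 := (Finset.mem_erase.mp hv3).1
      have hne31 : v3 ≠ v1 := (Finset.mem_erase.mp (Finset.mem_erase.mp hv3).2).1
      have hv2S : v2 ∈ S := (Finset.mem_erase.mp hv2).2
      have hv3S : v3 ∈ S := (Finset.mem_erase.mp (Finset.mem_erase.mp hv3).2).2
      have hSmem : ∀ v, v ∈ S → (1 ≤ f v ∧ min ((x - v).val) ((v - x).val) ≤ f v) := by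
        intro v hv
        rw [hS, Finset.mem_filter] at hv
        exact ⟨(hmemB v).mp hv.1, hv.2⟩
      -- integer representatives
      obtain ⟨a1, ha1n, ha1⟩ := exists_int_rep x v1 (f v1) (hSmem v1 hv1).2
      obtain ⟨a2, ha2n, ha2⟩ := exists_int_rep x v2 (f v2) (hSmem v2 hv2S).2
      obtain ⟨a3, ha3n, ha3⟩ := exists_int_rep x v3 (f v3) (hSmem v3 hv3S).2
      obtain ⟨b1, hb1n, hb1⟩ := exists_int_rep (p v1) v1 (f v1) ((hp v1 (hSmem v1 hv1).1).1)
      obtain ⟨b2, hb2n, hb2⟩ := exists_int_rep (p v2) v2 (f v2) ((hp v2 (hSmem v2 hv2S).1).1)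
      obtain ⟨b3, hb3n, hb3⟩ := exists_int_rep (p v3) v3 (f v3) ((hp v3 (hSmem v3 hv3S).1).1)
      have hpt1 : p v1 = x + ((b1 - a1 : ℤ) : Fin n) := by
        rw [hb1, ha1]; push_cast; ring
      have hpt2 : p v2 = x + ((b2 - a2 : ℤ) : Fin n) := by
        rw [hb2, ha2]; push_cast; ring
      have hpt3 : p v3 = x + ((b3 - a3 : ℤ) : Fin n) := by
        rw [hb3, ha3]; push_cast; ring
      have step : ∀ vi vj : Fin n, vi ∈ S → vj ∈ S → vi ≠ vj →
          ∀ ti aj bj : ℤ, p vi = x + (ti : Fin n) → x = vj + (aj : Fin n) →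
          aj.natAbs ≤ f vj → bj.natAbs ≤ f vj →
          ((0 ≤ ti ∧ ti ≤ bj - aj) ∨ (bj - aj ≤ ti ∧ ti ≤ 0)) → False := by
        intro vi vj hvi hvj hij ti aj bj hpti hxj hajn hbjn hbet
        have h4 := pair_contra (f vj) x vj (p vi) aj bj ti hxj hajn hbjn hpti hbet
        have h5 := (hp vi (hSmem vi hvi).1).2 vj (fun h => hij h.symm) (hSmem vj hvj).1
        omega
      have hsigns : (0 ≤ b1 - a1 ∧ b1 - a1 ≤ b2 - a2) ∨ (0 ≤ b2 - a2 ∧ b2 - a2 ≤ b1 - a1) ∨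
          (0 ≤ b1 - a1 ∧ b1 - a1 ≤ b3 - a3) ∨ (0 ≤ b3 - a3 ∧ b3 - a3 ≤ b1 - a1) ∨
          (0 ≤ b2 - a2 ∧ b2 - a2 ≤ b3 - a3) ∨ (0 ≤ b3 - a3 ∧ b3 - a3 ≤ b2 - a2) ∨
          (b2 - a2 ≤ b1 - a1 ∧ b1 - a1 ≤ 0) ∨ (b1 - a1 ≤ b2 - a2 ∧ b2 - a2 ≤ 0) ∨
          (b3 - a3 ≤ b1 - a1 ∧ b1 - a1 ≤ 0) ∨ (b1 - a1 ≤ b3 - a3 ∧ b3 - a3 ≤ 0) ∨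
          (b3 - a3 ≤ b2 - a2 ∧ b2 - a2 ≤ 0) ∨ (b2 - a2 ≤ b3 - a3 ∧ b3 - a3 ≤ 0) := by
        omega
      rcases hsigns with h|h|h|h|h|h|h|h|h|h|h|h
      · exact step v1 v2 hv1 hv2S (fun h => hne21 h.symm) (b1-a1) a2 b2 hpt1 ha2 ha2n hb2n (Or.inl h)
      · exact step v2 v1 hv2S hv1 hne21 (b2-a2) a1 b1 hpt2 ha1 ha1n hb1n (Or.inl h)
      · exact step v1 v3 hv1 hv3S (fun h => hne31 h.symm) (b1-a1) a3 b3 hpt1 ha3 ha3n hb3n (Or.inl h)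
      · exact step v3 v1 hv3S hv1 hne31 (b3-a3) a1 b1 hpt3 ha1 ha1n hb1n (Or.inl h)
      · exact step v2 v3 hv2S hv3S (fun h => hne32 h.symm) (b2-a2) a3 b3 hpt2 ha3 ha3n hb3n (Or.inl h)
      · exact step v3 v2 hv3S hv2S hne32 (b3-a3) a2 b2 hpt3 ha2 ha2n hb2n (Or.inl h)
      · exact step v1 v2 hv1 hv2S (fun h => hne21 h.symm) (b1-a1) a2 b2 hpt1 ha2 ha2n hb2n (Or.inr ⟨h.1, h.2⟩)
      · exact step v2 v1 hv2S hv1 hne21 (b2-a2) a1 b1 hpt2 ha1 ha1n hb1n (Or.inr ⟨h.1, h.2⟩)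
      · exact step v1 v3 hv1 hv3S (fun h => hne31 h.symm) (b1-a1) a3 b3 hpt1 ha3 ha3n hb3n (Or.inr ⟨h.1, h.2⟩)
      · exact step v3 v1 hv3S hv1 hne31 (b3-a3) a1 b1 hpt3 ha1 ha1n hb1n (Or.inr ⟨h.1, h.2⟩)
      · exact step v2 v3 hv2S hv3S (fun h => hne32 h.symm) (b2-a2) a3 b3 hpt2 ha3 ha3n hb3n (Or.inr ⟨h.1, h.2⟩)
      · exact step v3 v2 hv3S hv2S hne32 (b3-a3) a2 b2 hpt3 ha2 ha2n hb2n (Or.inr ⟨h.1, h.2⟩)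
    -- private vertices lie in at most one ball
    have hcp : ∀ v ∈ B, c (p v) ≤ 1 := by
      intro v hv
      rw [hc]
      refine le_trans (Finset.card_le_card ?_) (le_of_eq (Finset.card_singleton v))
      intro u hu
      rw [Finset.mem_filter] at hu
      rw [Finset.mem_singleton]
      by_contra hne
      have h4 := (hp v ((hmemB v).mp hv)).2 u hne ((hmemB u).mp hu.1)
      have h5 := hu.2
      omega
    -- p is injective on B
    have hinj : Set.InjOn p B := by
      intro v1 h1 v2 h2 h12
      by_contra hne
      have h4 := (hp v1 ((hmemB v1).mp (by exact_mod_cast h1))).1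
      have h5 := (hp v2 ((hmemB v2).mp (by exact_mod_cast h2))).2 v1
        hne ((hmemB v1).mp (by exact_mod_cast h1))
      rw [← h12] at h5
      omega
    set P : Finset (Fin n) := B.image p with hP
    have hPcard : P.card = B.card := Finset.card_image_of_injOn hinj
    have hPn : P.card ≤ n := le_trans (Finset.card_le_univ P) (by simp)
    have hsplit : ∑ x : Fin n, c x = ∑ x ∈ univ \ P, c x + ∑ x ∈ P, c x :=
      (Finset.sum_sdiff (Finset.subset_univ P)).symm
    have hb1 : ∑ x ∈ P, c x ≤ P.card := by
      refine le_trans (Finset.sum_le_card_nsmul P c 1 ?_) (by simp)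
      intro x hx
      obtain ⟨v, hv, rfl⟩ := Finset.mem_image.mp hx
      exact hcp v hv
    have hb2 : ∑ x ∈ univ \ P, c x ≤ (n - P.card) * 2 := by
      have hcard : (univ \ P).card = n - P.card := by
        rw [Finset.card_sdiff_of_subset (Finset.subset_univ P)]
        simp
      refine le_trans (Finset.sum_le_card_nsmul _ c 2 ?_) (by rw [hcard]; simp [mul_comm])
      intro x _
      exact hc2 x
    have hfinal : ∑ v ∈ B, (2 * f v + 1) ≤ (n - P.card) * 2 + P.card := by
      rw [← hsum, hsplit]
      omega
    have hexpand : ∑ v ∈ B, (2 * f v + 1) = 2 * (∑ v ∈ B, f v) + B.card := by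
      rw [Finset.sum_add_distrib, Finset.mul_sum, Finset.sum_const, smul_eq_mul, mul_one]
    have hBn : B.card ≤ n := le_trans (Finset.card_le_univ B) (by simp)
    rw [hcost]
    rw [hexpand, hPcard] at hfinal
    omega


lemma exists_minimal_broadcast (hn : 4 ≤ n) (hev : Even n) :
    ∃ f : Fin n → ℕ, MinimalDominatingBroadcast (cycleGraph n) f ∧ cost f = n - 2 := by
  haveI : NeZero n := ⟨by omega⟩
  have hn2 : 2 ≤ n := by omega
  obtain ⟨m, hm⟩ := hev
  have hm2 : 2 ≤ m := by omega
  set f : Fin n → ℕ := fun v => if v.val ≤ 1 then m - 1 else 0 with hfdef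
  have hfle : ∀ v : Fin n, f v ≤ m - 1 := by
    intro v
    rw [hfdef]
    dsimp only
    split <;> omega
  have hfval : ∀ v : Fin n, v.val ≤ 1 → f v = m - 1 := by
    intro v hv
    rw [hfdef]
    dsimp only
    rw [if_pos hv]
  have hfval' : ∀ v : Fin n, 2 ≤ v.val → f v = 0 := by
    intro v hv
    rw [hfdef]
    dsimp only
    rw [if_neg (by omega)]
  refine ⟨f, ⟨?_, ?_, ?_⟩, ?_⟩
  · -- IsBroadcast
    intro v
    by_cases hv : v.val ≤ 1
    · rw [hfval v hv]
      have hvlt := v.is_lt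
      set u : Fin n := ⟨v.val + (m - 1), by omega⟩ with hu
      have hd : (cycleGraph n).dist v u = m - 1 := by
        rw [dist_cycle hn2]
        have h1 := fin_sub_val' v u
        have h2 := fin_sub_val' u v
        have h3 := (v - u).is_lt
        have h4 := (u - v).is_lt
        have h5 : u.val = v.val + (m - 1) := rfl
        omega
      calc m - 1 = (cycleGraph n).dist v u := hd.symm
        _ ≤ _root_.eccent (cycleGraph n) v := Finset.le_sup (Finset.mem_univ u)
    · rw [hfval' v (by omega)]
      exact Nat.zero_le _
  · -- BroadcastDominates
    intro u
    have hvlt := u.is_lt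
    set z0 : Fin n := ⟨0, by omega⟩ with hz0
    set z1 : Fin n := ⟨1, by omega⟩ with hz1
    by_cases hu : u.val = m
    · refine ⟨z1, ?_, ?_⟩
      · rw [hfval z1 (by exact le_refl 1)]; omega
      · rw [hfval z1 (le_refl 1), dist_cycle hn2]
        have h1 := fin_sub_val' u z1
        have h2 := fin_sub_val' z1 u
        have h3 := (u - z1).is_lt
        have h4 := (z1 - u).is_lt
        have h5 : z1.val = 1 := rfl
        omega
    · refine ⟨z0, ?_, ?_⟩
      · rw [hfval z0 (by exact Nat.zero_le 1)]; omega
      · rw [hfval z0 (Nat.zero_le 1), dist_cycle hn2]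
        have h1 := fin_sub_val' u z0
        have h2 := fin_sub_val' z0 u
        have h3 := (u - z0).is_lt
        have h4 := (z0 - u).is_lt
        have h5 : z0.val = 0 := rfl
        omega
  · -- minimality
    intro g hgb hgle hgne hgdom
    obtain ⟨v, hv⟩ := Function.ne_iff.mp hgne
    have hglt : g v < f v := lt_of_le_of_ne (hgle v) hv
    have hv1 : v.val ≤ 1 := by
      by_contra hcon
      rw [hfval' v (by omega)] at hglt
      omega
    have hgv : g v ≤ m - 2 := by
      rw [hfval v hv1] at hglt
      omega
    have hzval : ∀ z : Fin n, 1 ≤ g z → z.val ≤ 1 := by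
      intro z hz
      by_contra hcon
      have hle : g z ≤ f z := hgle z
      rw [hfval' z (by omega)] at hle
      omega
    have hgz : ∀ z : Fin n, g z ≤ m - 1 := fun z => le_trans (hgle z) (hfle z)
    rcases Nat.le_one_iff_eq_zero_or_eq_one.mp hv1 with hv0 | hv1'
    · -- v.val = 0 : witness m+1
      set w : Fin n := ⟨m + 1, by omega⟩ with hw
      obtain ⟨z, hz1, hz2⟩ := hgdom w
      have hzv := hzval z hz1
      rw [dist_cycle hn2] at hz2
      have h1 := fin_sub_val' w z
      have h2 := fin_sub_val' z w
      have h3 := (w - z).is_lt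
      have h4 := (z - w).is_lt
      have h5 : w.val = m + 1 := rfl
      have h6 := z.is_lt
      have hmm : n = m + m := hm
      rcases Nat.le_one_iff_eq_zero_or_eq_one.mp hzv with hz0 | hz1'
      · have hzeq : z = v := Fin.ext (by rw [hz0, hv0])
        have h8 : g z ≤ m - 2 := by rw [hzeq]; exact hgv
        omega
      · have h8 : g z ≤ m - 1 := hgz z
        omega
    · -- v.val = 1 : witness m
      set w : Fin n := ⟨m, by omega⟩ with hw
      obtain ⟨z, hz1, hz2⟩ := hgdom w
      have hzv := hzval z hz1
      rw [dist_cycle hn2] at hz2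
      have h1 := fin_sub_val' w z
      have h2 := fin_sub_val' z w
      have h3 := (w - z).is_lt
      have h4 := (z - w).is_lt
      have h5 : w.val = m := rfl
      have h6 := z.is_lt
      have hmm : n = m + m := hm
      rcases Nat.le_one_iff_eq_zero_or_eq_one.mp hzv with hz0 | hz1'
      · have h8 : g z ≤ m - 1 := hgz z
        omega
      · have hzeq : z = v := Fin.ext (by rw [hz1', hv1'])
        have h8 : g z ≤ m - 2 := by rw [hzeq]; exact hgv
        omega
  · -- cost
    rw [cost, hfdef]
    have h1 : ∑ v : Fin n, (fun v : Fin n => if v.val ≤ 1 then m - 1 else 0) v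
        = ∑ i ∈ Finset.range n, (if i ≤ 1 then m - 1 else 0) :=
      Fin.sum_univ_eq_sum_range (fun i => if i ≤ 1 then m - 1 else 0) n
    rw [h1, ← Finset.sum_filter]
    have h2 : (Finset.range n).filter (fun i => i ≤ 1) = {0, 1} := by
      ext i
      simp only [Finset.mem_filter, Finset.mem_range, Finset.mem_insert, Finset.mem_singleton]
      omega
    rw [h2, Finset.sum_pair (by omega : (0:ℕ) ≠ 1)]
    omega

end main

/-- For every even `n ≥ 4`, `Γ_b(C_n) = n - 2`. -/
theorem upperBroadcast_cycle_even (n : ℕ) (hn : 4 ≤ n) (hev : Even n) :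
    upperBroadcast (cycleGraph n) = n - 2 := by
  obtain ⟨f, hf, hcost⟩ := exists_minimal_broadcast hn hev
  have hub : ∀ k ∈ {k : ℕ | ∃ f : Fin n → ℕ,
      MinimalDominatingBroadcast (cycleGraph n) f ∧ cost f = k}, k ≤ n - 2 := by
    rintro k ⟨g, hg, rfl⟩
    exact cost_le_of_minimal hn hev g hg
  apply le_antisymm
  · exact csSup_le ⟨n - 2, f, hf, hcost⟩ hub
  · exact le_csSup ⟨n - 2, hub⟩ ⟨f, hf, hcost⟩
end

section
/- For every odd integer n ≥ 5, the upper broadcast domination number of the cycle C_n equals n − 3: Γ_b(C_n) = n − 3. -/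
open SimpleGraph Finset

section CycleAux

open scoped Fin.NatCast Fin.IntCast Fin.CommRing

variable {n : ℕ} [NeZero n]

/-- cyclic distance on `Fin n` -/
def cd (a b : Fin n) : ℕ := min (b - a).val (a - b).val

lemma cd_comm (a b : Fin n) : cd a b = cd b a := min_comm _ _

lemma cd_self (a : Fin n) : cd a a = 0 := by
  have : (a - a).val = (a.val + (n - a.val)) % n := by rw [Fin.sub_def]; simp [Nat.add_comm]
  have h2 : a.val < n := a.isLt
  unfold cd
  have : (a - a).val = 0 := by rw [this]; rw [Nat.add_sub_cancel' (le_of_lt h2)]; simp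
  omega


lemma cd_le_of_natCast {m : ℕ} {a b : Fin n} (h : b - a = (m : Fin n)) : cd a b ≤ m := by
  have : (b - a).val = m % n := by rw [h, Fin.val_natCast]
  calc cd a b ≤ (b - a).val := min_le_left _ _
    _ = m % n := this
    _ ≤ m := Nat.mod_le _ _

lemma cd_le_of_natCast' {m : ℕ} {a b : Fin n} (h : a - b = (m : Fin n)) : cd a b ≤ m := by
  rw [cd_comm]; exact cd_le_of_natCast h

lemma cd_le_of_intCast {m : ℤ} {a b : Fin n} (h : b - a = ((m : ℤ) : Fin n)) :
    cd a b ≤ m.natAbs := by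
  rcases le_or_gt 0 m with hm | hm
  · rw [show m.natAbs = m.toNat by omega]
    apply cd_le_of_natCast (m := m.toNat)
    rw [h]
    rw [show ((m.toNat : ℕ) : Fin n) = ((m.toNat : ℤ) : Fin n) by push_cast; ring]
    rw [Int.toNat_of_nonneg hm]
  · rw [show m.natAbs = (-m).toNat by omega]
    have h' : a - b = (((-m).toNat : ℕ) : Fin n) := by
      rw [show a - b = -((m : ℤ) : Fin n) by rw [← h]; ring]
      rw [show ((((-m).toNat : ℕ)) : Fin n) = (((-m).toNat : ℤ) : Fin n) by push_cast; ring]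
      rw [Int.toNat_of_nonneg (by omega)]
      push_cast; ring
    exact cd_le_of_natCast' h' 

lemma natCast_ne_zero_fin {m : ℕ} (h1 : 0 < m) (h2 : m < n) : (m : Fin n) ≠ 0 := by
  intro h
  have : (m : Fin n).val = 0 := by rw [h]; rfl
  rw [Fin.val_natCast, Nat.mod_eq_of_lt h2] at this
  omega

lemma cd_eq_zero {a b : Fin n} (h : cd a b = 0) : a = b := by
  have : (b - a).val = 0 ∨ (a - b).val = 0 := by
    unfold cd at h; omega
  rcases this with h' | h'
  · have : b - a = 0 := Fin.ext (by simpa using h')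
    exact (sub_eq_zero.mp this).symm
  · have : a - b = 0 := Fin.ext (by simpa using h')
    exact sub_eq_zero.mp this

lemma val_sub_add_val_sub {a b : Fin n} (h : a ≠ b) : (b - a).val + (a - b).val = n := by
  have h1 : b - a ≠ 0 := fun hh => h (sub_eq_zero.mp hh).symm
  have h2 : a - b = -(b - a) := by ring
  have h3 : (b - a).val ≠ 0 := fun hh => h1 (Fin.ext (by simpa using hh))
  have h4 : (a - b).val = (n - (b - a).val) % n := by rw [h2, Fin.neg_def]
  have hlt : (b - a).val < n := (b - a).isLt
  have : (n - (b - a).val) % n = n - (b - a).val := Nat.mod_eq_of_lt (by omega)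
  omega

/-- exact value of cd from a natural representative -/
lemma cd_eq_of_natCast {m : ℕ} {a b : Fin n} (h : b - a = (m : Fin n)) (hm : m < n) :
    cd a b = min m (n - m) := by
  rcases Nat.eq_zero_or_pos m with rfl | hpos
  · have hab : a = b := by
      have : b - a = 0 := by simpa using h
      exact (sub_eq_zero.mp this).symm
    subst hab
    simp [cd_self]
  · have hval : (b - a).val = m := by rw [h, Fin.val_natCast, Nat.mod_eq_of_lt hm]
    have hne : a ≠ b := by
      intro hh
      subst hh
      have := cd_self a
      unfold cd at this
      omega
    have := val_sub_add_val_sub hne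
    unfold cd; omega

lemma cd_rep (a b : Fin n) : ∃ e : ℤ, (e = cd a b ∨ e = -(cd a b)) ∧ b - a = ((e : ℤ) : Fin n) := by
  rcases min_cases (b - a).val (a - b).val with ⟨hmin, _⟩ | ⟨hmin, _⟩
  · refine ⟨(cd a b : ℤ), Or.inl rfl, ?_⟩
    have : b - a = (((b-a).val : ℕ) : Fin n) := by rw [Fin.cast_val_eq_self]
    rw [this]
    unfold cd
    rw [hmin]
    push_cast
    rfl
  · refine ⟨-(cd a b : ℤ), Or.inr rfl, ?_⟩
    have : a - b = (((a-b).val : ℕ) : Fin n) := by rw [Fin.cast_val_eq_self]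
    have h2 : b - a = -(((a-b).val : ℕ) : Fin n) := by rw [← this]; ring
    rw [h2]
    unfold cd
    rw [hmin]
    push_cast
    ring

lemma cd_triangle (a c b : Fin n) : cd a b ≤ cd a c + cd c b := by
  obtain ⟨e1, he1, hr1⟩ := cd_rep a c
  obtain ⟨e2, he2, hr2⟩ := cd_rep c b
  have : b - a = ((e1 + e2 : ℤ) : Fin n) := by
    have : b - a = (b - c) + (c - a) := by ring
    rw [this, hr1, hr2]; push_cast; ring
  have := cd_le_of_intCast this
  rcases he1 with h1 | h1 <;> rcases he2 with h2 | h2 <;> omega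

lemma cd_adj (hn : 2 ≤ n) {a b : Fin n} (h : (cycleGraph n).Adj a b) : cd a b ≤ 1 := by
  rw [cycleGraph_adj'] at h
  unfold cd
  omega

lemma cycle_connected (hn : 2 ≤ n) : (cycleGraph n).Connected := by
  obtain ⟨m, rfl⟩ : ∃ m, n = m + 1 := ⟨n - 1, by omega⟩
  exact cycleGraph_connected

lemma dist_add_natCast_le (hn : 2 ≤ n) (a : Fin n) (m : ℕ) :
    (cycleGraph n).dist a (a + (m : Fin n)) ≤ m := by
  induction m with
  | zero => simp
  | succ m ih =>
    have hadj : (cycleGraph n).Adj (a + (m : Fin n)) (a + ((m+1 : ℕ) : Fin n)) := by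
      rw [cycleGraph_adj']
      right
      have : a + ((m+1 : ℕ) : Fin n) - (a + (m : Fin n)) = ((1:ℕ) : Fin n) := by
        push_cast; ring
      rw [this, Fin.val_natCast, Nat.mod_eq_of_lt hn]
    calc (cycleGraph n).dist a (a + ((m+1:ℕ) : Fin n))
        ≤ (cycleGraph n).dist a (a + (m : Fin n))
          + (cycleGraph n).dist (a + (m : Fin n)) (a + ((m+1:ℕ) : Fin n)) :=
          (cycle_connected hn).dist_triangle
      _ ≤ m + 1 := by
          have := (SimpleGraph.dist_eq_one_iff_adj.mpr hadj).le
          omega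

lemma cd_le_walk (hn : 2 ≤ n) {a b : Fin n} (p : (cycleGraph n).Walk a b) :
    cd a b ≤ p.length := by
  induction p with
  | nil => simp [cd_self]
  | @cons u v w h p ih =>
    have h1 := cd_adj hn h
    have h2 := cd_triangle u v w
    simp only [SimpleGraph.Walk.length_cons]
    omega

lemma cycle_dist (hn : 2 ≤ n) (a b : Fin n) : (cycleGraph n).dist a b = cd a b := by
  apply le_antisymm
  · obtain ⟨e, he, hr⟩ := cd_rep a b
    rcases he with h | h
    · have hb : b = a + ((cd a b : ℕ) : Fin n) := by
        rw [show ((cd a b : ℕ) : Fin n) = ((e : ℤ) : Fin n) by rw [h]; push_cast; rfl, ← hr]; ring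
      calc (cycleGraph n).dist a b = (cycleGraph n).dist a (a + ((cd a b : ℕ):Fin n)) := by rw [← hb]
        _ ≤ cd a b := dist_add_natCast_le hn a _
    · have ha : a = b + ((cd a b : ℕ) : Fin n) := by
        have : a - b = ((cd a b : ℕ) : Fin n) := by
          rw [show ((cd a b : ℕ) : Fin n) = ((-e : ℤ) : Fin n) by rw [h]; push_cast; ring]
          rw [show a - b = -(b-a) by ring, hr]; push_cast; ring
        rw [← this]; ring
      rw [SimpleGraph.dist_comm]
      calc (cycleGraph n).dist b a = (cycleGraph n).dist b (b + ((cd a b : ℕ):Fin n)) := by rw [← ha]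
        _ ≤ cd a b := dist_add_natCast_le hn b _
  · obtain ⟨p, hp⟩ := ((cycle_connected hn) a b).exists_walk_length_eq_dist
    rw [← hp]
    exact cd_le_walk hn p


lemma cycle_eccent (hn : n = 2*k+1) (hk : 1 ≤ k) (v : Fin n) :
    _root_.eccent (cycleGraph n) v = k := by
  have hn2 : 2 ≤ n := by omega
  apply le_antisymm
  · apply Finset.sup_le
    intro u _
    rw [cycle_dist hn2]
    by_cases h : v = u
    · subst h; rw [cd_self]; omega
    · have := val_sub_add_val_sub h
      unfold cd; omega
  · have hle : (cycleGraph n).dist v (v + ((k:ℕ) : Fin n)) = k := by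
      rw [cycle_dist hn2]
      rw [cd_eq_of_natCast (m := k) (by ring) (by omega)]
      omega
    calc k = (cycleGraph n).dist v (v + ((k:ℕ):Fin n)) := hle.symm
      _ ≤ _ := Finset.le_sup (Finset.mem_univ _)

lemma cycle_lower (hn : n = 2*k+1) (hk : 2 ≤ k) :
    ∃ f : Fin n → ℕ, MinimalDominatingBroadcast (cycleGraph n) f ∧ cost f = n - 3 := by
  have hn2 : 2 ≤ n := by omega
  set b2 : Fin n := ((2:ℕ) : Fin n) with hb2
  have hb2v : (b2 : Fin n).val = 2 := by rw [hb2, Fin.val_natCast, Nat.mod_eq_of_lt (by omega)]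
  have hb20 : b2 ≠ 0 := by intro h; rw [h] at hb2v; simp at hb2v
  set f : Fin n → ℕ := fun v => if v = 0 ∨ v = b2 then k - 1 else 0 with hf
  have hf0 : f 0 = k - 1 := by simp [hf]
  have hfb2 : f b2 = k - 1 := by simp [hf]
  have hfother : ∀ v : Fin n, ¬(v = 0 ∨ v = b2) → f v = 0 := by
    intro v hv; simp only [hf, if_neg hv]
  -- distances from the two witnesses
  set w0 : Fin n := ((k+2 : ℕ) : Fin n) with hw0
  set w2 : Fin n := ((k+1 : ℕ) : Fin n) with hw2
  have hcdw00 : cd w0 0 = k - 1 := by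
    rw [cd_comm, cd_eq_of_natCast (m := k+2) (by rw [hw0]; ring) (by omega)]
    omega
  have hcdw02 : cd w0 b2 = k := by
    rw [cd_comm, cd_eq_of_natCast (m := k) ?_ (by omega)]
    · omega
    · rw [hw0, hb2]
      rw [show ((k+2:ℕ) : Fin n) = ((k:ℕ) : Fin n) + ((2:ℕ):Fin n) by push_cast; ring]
      ring
  have hcdw22 : cd w2 b2 = k - 1 := by
    rw [cd_comm, cd_eq_of_natCast (m := k-1) ?_ (by omega)]
    · omega
    · rw [hw2, hb2]
      rw [show ((k+1:ℕ) : Fin n) = ((k-1:ℕ) : Fin n) + ((2:ℕ):Fin n) by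
        rw [show ((k+1:ℕ):Fin n) = (((k-1)+2:ℕ):Fin n) by congr 1; omega]; push_cast; ring]
      ring
  have hcdw20 : cd w2 0 = k := by
    rw [cd_comm, cd_eq_of_natCast (m := k+1) (by rw [hw2]; ring) (by omega)]
    omega
  refine ⟨f, ⟨?_, ?_, ?_⟩, ?_⟩
  · -- IsBroadcast
    intro v
    rw [cycle_eccent hn (by omega)]
    by_cases h : v = 0 ∨ v = b2 <;> simp [hf, h] <;> omega
  · -- dominates
    intro u
    set p := u.val with hp
    have hup : u = ((p:ℕ) : Fin n) := by rw [hp, Fin.cast_val_eq_self]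
    have hcd0 : cd u 0 = min p (n - p) := by
      rw [cd_comm, cd_eq_of_natCast (m := p) (by rw [← hup]; ring) u.isLt]
    by_cases hp2 : 2 ≤ p
    · have hcd2 : cd u b2 = min (p-2) (n - (p-2)) := by
        rw [cd_comm, cd_eq_of_natCast (m := p-2) ?_ (by omega)]
        rw [hb2, hup]
        rw [show ((p:ℕ) : Fin n) = (((p-2)+2 : ℕ) : Fin n) by congr 1; omega]
        push_cast; ring
      by_cases hc : min p (n-p) ≤ k - 1
      · exact ⟨0, by rw [hf0]; omega, by rw [cycle_dist hn2, hcd0]; omega⟩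
      · refine ⟨b2, by rw [hfb2]; omega, by rw [cycle_dist hn2, hcd2]; omega⟩
    · exact ⟨0, by rw [hf0]; omega, by rw [cycle_dist hn2, hcd0]; omega⟩
  · -- minimality
    intro g _ hle hne hdom
    have hgother : ∀ v : Fin n, ¬(v = 0 ∨ v = b2) → g v = 0 := by
      intro v hv
      have h2 : g v ≤ f v := hle v
      rw [hfother v hv] at h2
      omega
    have : g 0 < k - 1 ∨ g b2 < k - 1 := by
      by_contra hcon
      push_neg at hcon
      apply hne
      funext v
      by_cases h : v = 0 ∨ v = b2
      · rcases h with h | h <;> subst h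
        · have h2 : g 0 ≤ f 0 := hle 0; omega
        · have h2 : g b2 ≤ f b2 := hle b2; omega
      · rw [hgother v h, hfother v h]
    rcases this with hg | hg
    · obtain ⟨w, hw1, hwd⟩ := hdom w0
      rw [cycle_dist hn2] at hwd
      by_cases h : w = 0 ∨ w = b2
      · rcases h with h | h <;> subst h
        · rw [hcdw00] at hwd; omega
        · rw [hcdw02] at hwd
          have h2 : g b2 ≤ f b2 := hle b2; omega
      · rw [hgother w h] at hw1; omega
    · obtain ⟨w, hw1, hwd⟩ := hdom w2
      rw [cycle_dist hn2] at hwd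
      by_cases h : w = 0 ∨ w = b2
      · rcases h with h | h <;> subst h
        · rw [hcdw20] at hwd
          have h2 : g 0 ≤ f 0 := hle 0; omega
        · rw [hcdw22] at hwd; omega
      · rw [hgother w h] at hw1; omega
  · -- cost
    unfold cost
    have : ∀ v : Fin n, f v = if v ∈ ({0, b2} : Finset (Fin n)) then k - 1 else 0 := by
      intro v; simp [hf, Finset.mem_insert, Finset.mem_singleton]
    rw [Finset.sum_congr rfl (fun v _ => this v)]
    rw [Finset.sum_ite_mem]
    rw [Finset.univ_inter, Finset.sum_const]
    rw [Finset.card_insert_of_notMem (by simp only [Finset.mem_singleton]; exact fun h => hb20 h.symm), Finset.card_singleton]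
    simp only [smul_eq_mul]
    omega

lemma intCast_fin_eq_zero {z : ℤ} (h : ((z:ℤ):Fin n) = 0) (hz : z.natAbs < n) : z = 0 := by
  rcases Int.natAbs_eq z with he | he
  · by_contra hne
    refine natCast_ne_zero_fin (m := z.natAbs) (by omega) hz ?_
    rw [← Int.cast_natCast (R := Fin n), ← he]; exact h
  · by_contra hne
    have h2 : ((-z : ℤ) : Fin n) = 0 := by push_cast; rw [h]; ring
    refine natCast_ne_zero_fin (m := z.natAbs) (by omega) hz ?_
    rw [← Int.cast_natCast (R := Fin n), show ((z.natAbs : ℤ)) = -z by omega]; exact h2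

/-- the point at signed offset `ε * j` from `v` -/
def pt (v : Fin n) (ε : ℤ) (j : ℕ) : Fin n := v + ((ε * j : ℤ) : Fin n)

lemma pt_zero (v : Fin n) (ε : ℤ) : pt v ε 0 = v := by simp [pt]

/-- `u` is heard only by `v` among broadcasters -/
def Priv (f : Fin n → ℕ) (v u : Fin n) : Prop :=
  ∀ w, 1 ≤ f w → w ≠ v → f w < cd u w

/-- extraction of private boundary data from minimality -/
lemma extraction {k : ℕ} (hn : n = 2*k+1) (hk : 2 ≤ k) (f : Fin n → ℕ)
    (hbr : IsBroadcast (cycleGraph n) f)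
    (hdom : ∀ u : Fin n, ∃ w, 1 ≤ f w ∧ cd u w ≤ f w)
    (hmin : ∀ g : Fin n → ℕ, IsBroadcast (cycleGraph n) g → g ≤ f → g ≠ f →
      ¬ BroadcastDominates (cycleGraph n) g)
    (v : Fin n) :
    ∃ (ε : ℤ) (m : ℕ), (ε = 1 ∨ ε = -1) ∧ (1 ≤ f v →
      (m ≤ f v ∧ Priv f v (pt v ε m) ∧ (m = f v ∨ (m = 0 ∧ f v = 1 ∧
        ∀ s : ℤ, (s = 1 ∨ s = -1) → ∃ w, 1 ≤ f w ∧ w ≠ v ∧ cd (v + ((s : ℤ) : Fin n)) w ≤ f w)))) := by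
  have hn2 : 2 ≤ n := by omega
  by_cases hv : 1 ≤ f v
  swap
  · exact ⟨1, 0, Or.inl rfl, fun h => absurd h hv⟩
  -- apply minimality to f decreased at v
  set g : Fin n → ℕ := Function.update f v (f v - 1) with hg
  have hgv : g v = f v - 1 := Function.update_self v _ f
  have hgw : ∀ w, w ≠ v → g w = f w := fun w hw => Function.update_of_ne hw _ f
  have hgb : IsBroadcast (cycleGraph n) g := by
    intro w
    by_cases hw : w = v
    · rw [hw, hgv]; exact le_trans (Nat.sub_le _ _) (hbr v)
    · rw [hgw w hw]; exact hbr w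
  have hgle : g ≤ f := by
    intro w
    by_cases hw : w = v
    · rw [hw, hgv]; exact Nat.sub_le _ _
    · rw [hgw w hw]
  have hgne : g ≠ f := by
    intro h
    have := congrFun h v
    rw [hgv] at this
    omega
  have hnd := hmin g hgb hgle hgne
  unfold BroadcastDominates at hnd
  push_neg at hnd
  obtain ⟨u, hu⟩ := hnd
  have hu' : ∀ w : Fin n, 1 ≤ g w → g w < cd u w := by
    intro w h1
    have := hu w h1
    rwa [cycle_dist hn2] at this
  -- u is covered only by v
  have hupriv : Priv f v u := by
    intro w h1 hwv
    have := hu' w (by rw [hgw w hwv]; exact h1)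
    rwa [hgw w hwv] at this
  have huv : cd u v ≤ f v := by
    obtain ⟨w, hw1, hw2⟩ := hdom u
    by_cases hwv : w = v
    · rwa [hwv] at hw2
    · exact absurd hw2 (by have := hupriv w hw1 hwv; omega)
  have hualt : f v = 1 ∨ cd u v = f v := by
    by_cases h1 : f v = 1
    · exact Or.inl h1
    · have := hu' v (by omega)
      rw [hgv] at this
      right
      omega
  clear hu hu' hgne hgle hgb hgv hgw
  by_cases hex : ∃ u' : Fin n, cd u' v = f v ∧ Priv f v u'
  · obtain ⟨u', hcd, hpriv⟩ := hex
    unfold cd at hcd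
    rcases (show (u' - v).val = f v ∨ (v - u').val = f v by omega) with hc | hc
    · refine ⟨1, f v, Or.inl rfl, fun _ => ⟨le_refl _, ?_, Or.inl rfl⟩⟩
      have : pt v 1 (f v) = u' := by
        unfold pt
        rw [show ((1 * (f v : ℤ) : ℤ) : Fin n) = ((f v : ℕ) : Fin n) by push_cast; ring]
        rw [← hc, Fin.cast_val_eq_self]
        ring
      rwa [this]
    · refine ⟨-1, f v, Or.inr rfl, fun _ => ⟨le_refl _, ?_, Or.inl rfl⟩⟩
      have : pt v (-1) (f v) = u' := by
        unfold pt
        rw [show (((-1) * (f v : ℤ) : ℤ) : Fin n) = -((f v : ℕ) : Fin n) by push_cast; ring]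
        rw [← hc, Fin.cast_val_eq_self]
        ring
      rwa [this]
  · -- degenerate case
    have hcdne : cd u v ≠ f v := fun h => hex ⟨u, h, hupriv⟩
    have hfv1 : f v = 1 := by tauto
    have hcd0 : cd u v = 0 := by omega
    have huv' : u = v := cd_eq_zero hcd0
    refine ⟨1, 0, Or.inl rfl, fun _ => ⟨by omega, ?_, Or.inr ⟨rfl, hfv1, ?_⟩⟩⟩
    · rw [pt_zero]; rw [huv'] at hupriv; exact hupriv
    · intro s hs
      by_contra hno
      push_neg at hno
      refine hex ⟨v + ((s : ℤ) : Fin n), ?_, ?_⟩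
      · rw [hfv1]
        rcases hs with rfl | rfl
        · rw [cd_comm, cd_eq_of_natCast (m := 1) (a := v) (b := v + ((1:ℤ):Fin n)) ?_ (by omega)]
          · omega
          · push_cast; ring
        · rw [cd_eq_of_natCast (m := 1) (a := v + (((-1):ℤ):Fin n)) (b := v) ?_ (by omega)]
          · omega
          · push_cast; ring
      · intro w h1 hwv
        have := hno w h1 hwv
        omega

/-- two arcs overlapping is impossible -/
lemma coreA {f : Fin n → ℕ} {v w : Fin n} {εv εw : ℤ} {mv mw i j : ℕ}
    (hεv : εv = 1 ∨ εv = -1) (hεw : εw = 1 ∨ εw = -1)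
    (hvw : v ≠ w) (hfw : 1 ≤ f w) (hfv : 1 ≤ f v)
    (hmv : mv ≤ f v) (hmw : mw ≤ f w)
    (hpv : Priv f v (pt v εv mv)) (hpw : Priv f w (pt w εw mw))
    (hi : i ≤ mv) (hj : j ≤ mw)
    (heq : pt v εv i = pt w εw j) : False := by
  have hw' : w = v + ((εv * i : ℤ):Fin n) - ((εw * j : ℤ):Fin n) := by
    unfold pt at heq; rw [heq]; ring
  have h1 : pt v εv mv - w = ((εv*mv - εv*i + εw*j : ℤ) : Fin n) := by
    rw [hw']; unfold pt; push_cast; ring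
  have hv' : v = w + ((εw * j : ℤ):Fin n) - ((εv * i : ℤ):Fin n) := by
    unfold pt at heq; rw [← heq]; ring
  have h2 : pt w εw mw - v = ((εw*mw - εw*j + εv*i : ℤ) : Fin n) := by
    rw [hv']; unfold pt; push_cast; ring
  have hA := cd_le_of_intCast h1
  have hB := cd_le_of_intCast h2
  have hA' : f w < cd w (pt v εv mv) := by
    rw [cd_comm]; exact hpv w hfw (Ne.symm hvw)
  have hB' : f v < cd v (pt w εw mw) := by
    rw [cd_comm]; exact hpw v hfv hvw
  rcases hεv with rfl | rfl <;> rcases hεw with rfl | rfl <;> omega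

/-- the spare neighbour of a degenerate broadcaster hits no arc -/
lemma coreB {f : Fin n → ℕ} {v w : Fin n} {εw : ℤ} {mw j : ℕ}
    (hεw : εw = 1 ∨ εw = -1) (hvw : v ≠ w) (hfw : 1 ≤ f w) (hfv : 1 ≤ f v)
    (hfv1 : f v = 1) (hmw : mw ≤ f w)
    (hpv : Priv f v v) (hpw : Priv f w (pt w εw mw)) (hj : j ≤ mw)
    (heq : v + 1 = pt w εw j) : False := by
  have hw' : w = v + 1 - ((εw * j : ℤ):Fin n) := by
    unfold pt at heq; rw [heq]; ring
  have h1 : v - w = ((εw*j - 1 : ℤ) : Fin n) := by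
    rw [hw']; push_cast; ring
  have h2 : pt w εw mw - v = ((εw*mw - εw*j + 1 : ℤ) : Fin n) := by
    rw [hw']; unfold pt; push_cast; ring
  have hA := cd_le_of_intCast h1
  have hB := cd_le_of_intCast h2
  have hA' : f w < cd w v := by
    rw [cd_comm]; exact hpv w hfw (Ne.symm hvw)
  have hB' : f v < cd v (pt w εw mw) := by
    rw [cd_comm]; exact hpw v hfv hvw
  rcases hεw with rfl | rfl <;> omega
lemma cycle_upper {k : ℕ} (hn : n = 2*k+1) (hk : 2 ≤ k) (f : Fin n → ℕ)
    (hmdb : MinimalDominatingBroadcast (cycleGraph n) f) : cost f ≤ n - 3 := by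
  obtain ⟨hbr, hdom0, hmin⟩ := hmdb
  have hn2 : 2 ≤ n := by omega
  have hfk : ∀ v, f v ≤ k := fun v => by
    have := hbr v; rwa [cycle_eccent hn (by omega)] at this
  have hdom : ∀ u : Fin n, ∃ w, 1 ≤ f w ∧ cd u w ≤ f w := by
    intro u
    obtain ⟨w, h1, h2⟩ := hdom0 u
    exact ⟨w, h1, by rwa [cycle_dist hn2] at h2⟩
  choose ε m hε hrest using fun v => extraction hn hk f hbr hdom hmin v
  set supp : Finset (Fin n) := Finset.univ.filter (fun v => 1 ≤ f v) with hsupp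
  have mem_supp : ∀ v : Fin n, v ∈ supp ↔ 1 ≤ f v := by
    intro v; simp [hsupp]
  -- basic facts per broadcaster
  have hmle : ∀ v ∈ supp, m v ≤ f v := fun v hv => ((hrest v) ((mem_supp v).mp hv)).1
  have hpriv : ∀ v ∈ supp, Priv f v (pt v (ε v) (m v)) :=
    fun v hv => ((hrest v) ((mem_supp v).mp hv)).2.1
  have hdeg : ∀ v ∈ supp, m v = 0 → (f v = 1 ∧ Priv f v v ∧
      ∀ s : ℤ, (s = 1 ∨ s = -1) → ∃ w, 1 ≤ f w ∧ w ≠ v ∧ cd (v + ((s : ℤ) : Fin n)) w ≤ f w) := by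
    intro v hv hm0
    have h1 := (mem_supp v).mp hv
    obtain ⟨hle, hp, halt⟩ := (hrest v) h1
    rcases halt with h | ⟨_, hf1, hnbr⟩
    · omega
    · refine ⟨hf1, ?_, hnbr⟩
      rw [hm0, pt_zero] at hp
      exact hp
  have hnorm : ∀ v ∈ supp, m v ≠ 0 → m v = f v := by
    intro v hv hm0
    obtain ⟨hle, hp, halt⟩ := (hrest v) ((mem_supp v).mp hv)
    rcases halt with h | ⟨h, _, _⟩
    · exact h
    · omega
  -- the arcs
  set S : Fin n → Finset (Fin n) := fun v => (Finset.range (m v + 1)).image (pt v (ε v)) with hS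
  set T : Fin n → Finset (Fin n) := fun v => if m v = 0 then {v, v + 1} else S v with hT
  have mem_S : ∀ v x, x ∈ S v ↔ ∃ j ≤ m v, pt v (ε v) j = x := by
    intro v x
    simp only [hS, Finset.mem_image, Finset.mem_range]
    constructor
    · rintro ⟨j, hj, rfl⟩; exact ⟨j, by omega, rfl⟩
    · rintro ⟨j, hj, rfl⟩; exact ⟨j, by omega, rfl⟩
  have hone : (1 : Fin n) ≠ 0 := by
    have : ((1:ℕ) : Fin n) ≠ 0 := natCast_ne_zero_fin (by omega) (by omega)
    simpa using this
  have hScard : ∀ v ∈ supp, (S v).card = m v + 1 := by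
    intro v hv
    simp only [hS]
    rw [Finset.card_image_of_injOn, Finset.card_range]
    intro i hi j hj hij
    simp only [Finset.mem_range, Finset.mem_coe] at hi hj
    unfold pt at hij
    have h2 : ((ε v * i : ℤ) : Fin n) = ((ε v * j : ℤ) : Fin n) := by
      exact add_left_cancel hij
    have h3 : ((ε v * i - ε v * j : ℤ) : Fin n) = 0 := by
      push_cast
      rw [show ((ε v : Fin n) * (i:ℕ) : Fin n) = ((ε v * i : ℤ) : Fin n) by push_cast; ring]
      rw [h2]
      push_cast
      ring
    have h4 : (ε v * i - ε v * j : ℤ).natAbs < n := by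
      have hm := hmle v hv
      have hfkv := hfk v
      rcases hε v with he | he <;> rw [he] <;> omega
    have := intCast_fin_eq_zero h3 h4
    rcases hε v with he | he <;> rw [he] at this <;> omega
  have hTcard : ∀ v ∈ supp, (T v).card = f v + 1 := by
    intro v hv
    simp only [hT]
    by_cases hm0 : m v = 0
    · rw [if_pos hm0]
      obtain ⟨hf1, _, _⟩ := hdeg v hv hm0
      rw [Finset.card_insert_of_notMem (by
        simp only [Finset.mem_singleton]
        intro h
        exact hone (by
          have : v + 1 - v = (0 : Fin n) := by rw [← h]; ring
          calc (1 : Fin n) = v + 1 - v := by ring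
            _ = 0 := this)), Finset.card_singleton, hf1]
    · rw [if_neg hm0, hScard v hv, hnorm v hv hm0]
  -- pairwise disjointness
  have hdisj : ∀ v ∈ supp, ∀ w ∈ supp, v ≠ w → Disjoint (T v) (T w) := by
    intro v hv w hw hvw
    rw [Finset.disjoint_left]
    intro x hxv hxw
    have hfv := (mem_supp v).mp hv
    have hfw := (mem_supp w).mp hw
    -- translate membership
    have hmemv : (∃ i ≤ m v, pt v (ε v) i = x) ∨ (m v = 0 ∧ x = v + 1) := by
      simp only [hT] at hxv
      by_cases hm0 : m v = 0
      · rw [if_pos hm0] at hxv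
        simp only [Finset.mem_insert, Finset.mem_singleton] at hxv
        rcases hxv with h | h
        · exact Or.inl ⟨0, by omega, by rw [pt_zero]; exact h.symm⟩
        · exact Or.inr ⟨hm0, h⟩
      · rw [if_neg hm0] at hxv
        exact Or.inl ((mem_S v x).mp hxv)
    have hmemw : (∃ j ≤ m w, pt w (ε w) j = x) ∨ (m w = 0 ∧ x = w + 1) := by
      simp only [hT] at hxw
      by_cases hm0 : m w = 0
      · rw [if_pos hm0] at hxw
        simp only [Finset.mem_insert, Finset.mem_singleton] at hxw
        rcases hxw with h | h
        · exact Or.inl ⟨0, by omega, by rw [pt_zero]; exact h.symm⟩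
        · exact Or.inr ⟨hm0, h⟩
      · rw [if_neg hm0] at hxw
        exact Or.inl ((mem_S w x).mp hxw)
    rcases hmemv with ⟨i, hi, hpi⟩ | ⟨hmv0, rfl⟩
    · rcases hmemw with ⟨j, hj, hpj⟩ | ⟨hmw0, rfl⟩
      · exact coreA (hε v) (hε w) hvw hfw hfv (hmle v hv) (hmle w hw)
          (hpriv v hv) (hpriv w hw) hi hj (hpi.trans hpj.symm)
      · -- x = w + 1, x ∈ S v : coreB with roles swapped
        obtain ⟨hfw1, hprivw, _⟩ := hdeg w hw hmw0
        exact coreB (hε v) (Ne.symm hvw) hfv hfw hfw1 (hmle v hv) hprivw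
          (hpriv v hv) hi hpi.symm
    · rcases hmemw with ⟨j, hj, hpj⟩ | ⟨hmw0, h1⟩
      · obtain ⟨hfv1, hprivv, _⟩ := hdeg v hv hmv0
        exact coreB (hε w) hvw hfw hfv hfv1 (hmle w hw) hprivv
          (hpriv w hw) hj hpj.symm
      · exact hvw (by
          have := h1
          exact add_right_cancel this)
  -- the counting
  have hsum : (∑ v ∈ supp, (f v + 1)) ≤ n := by
    calc (∑ v ∈ supp, (f v + 1)) = ∑ v ∈ supp, (T v).card :=
          Finset.sum_congr rfl (fun v hv => (hTcard v hv).symm)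
      _ = (supp.biUnion T).card := (Finset.card_biUnion hdisj).symm
      _ ≤ (Finset.univ : Finset (Fin n)).card := Finset.card_le_card (Finset.subset_univ _)
      _ = n := by simp
  have hcost : cost f = ∑ v ∈ supp, f v := by
    unfold cost
    rw [Finset.sum_filter_of_ne]
    intro v _ hfv
    omega
  have hcard : cost f + supp.card ≤ n := by
    rw [hcost]
    have := Finset.sum_add_distrib (s := supp) (f := fun v => f v) (g := fun _ => 1)
    rw [Finset.sum_const, smul_eq_mul, mul_one] at this
    omega
  -- supp is nonempty
  have h0 : supp.Nonempty := by
    obtain ⟨w, hw1, _⟩ := hdom ⟨0, by omega⟩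
    exact ⟨w, (mem_supp w).mpr hw1⟩
  have hc1 : 1 ≤ supp.card := Finset.card_pos.mpr h0
  by_cases hc3 : 3 ≤ supp.card
  · omega
  by_cases hc1' : supp.card = 1
  · obtain ⟨v, hv⟩ := Finset.card_eq_one.mp hc1'
    have : cost f = f v := by rw [hcost, hv, Finset.sum_singleton]
    have := hfk v
    omega
  -- two broadcasters
  have hc2 : supp.card = 2 := by omega
  obtain ⟨v1, v2, hne12, hs⟩ := Finset.card_eq_two.mp hc2
  have hv1 : v1 ∈ supp := by rw [hs]; exact Finset.mem_insert_self _ _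
  have hv2 : v2 ∈ supp := by rw [hs]; simp
  have hf1 : 1 ≤ f v1 := (mem_supp v1).mp hv1
  have hf2 : 1 ≤ f v2 := (mem_supp v2).mp hv2
  have hcost2 : cost f = f v1 + f v2 := by
    rw [hcost, hs, Finset.sum_insert (by simpa using hne12), Finset.sum_singleton]
  by_cases hfin : cost f ≤ n - 3
  · exact hfin
  exfalso
  have hceq : f v1 + f v2 + 2 = n := by omega
  -- no degenerate broadcaster
  have hnodeg : ∀ a b : Fin n, a ∈ supp → b ∈ supp → a ≠ b →
      (∀ w ∈ supp, w ≠ a → w = b) → m a ≠ 0 := by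
    intro a b ha hb hab hother hma0
    obtain ⟨hfa1, hpriva, hnbr⟩ := hdeg a ha hma0
    have hfa := (mem_supp a).mp ha
    have hfb := (mem_supp b).mp hb
    obtain ⟨w1, hw11, hw12, hw13⟩ := hnbr 1 (Or.inl rfl)
    obtain ⟨w2, hw21, hw22, hw23⟩ := hnbr (-1) (Or.inr rfl)
    have hw1b : w1 = b := hother w1 ((mem_supp w1).mpr hw11) hw12
    have hw2b : w2 = b := hother w2 ((mem_supp w2).mpr hw21) hw22
    rw [hw1b] at hw13
    rw [hw2b] at hw23
    -- val computations
    set p : ℕ := (a - b).val with hp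
    set q : ℕ := (b - a).val with hq
    have hpq : q + p = n := val_sub_add_val_sub hab
    have hq0 : q ≠ 0 := by
      intro h
      exact hab (by
        have : b - a = 0 := Fin.ext (by simp only [Fin.val_zero]; exact h)
        exact (sub_eq_zero.mp this).symm)
    have hp0 : p ≠ 0 := by
      intro h
      exact hab (by
        have : a - b = 0 := Fin.ext (by simp only [Fin.val_zero]; exact h)
        exact sub_eq_zero.mp this)
    have hcdab : f b < min q p := hpriva b hfb (Ne.symm hab)
    have hab' : a - b = ((p : ℕ) : Fin n) := by rw [hp, Fin.cast_val_eq_self]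
    have hcd1 : p + 1 < n → min (p+1) (n - (p+1)) ≤ f b := by
      intro hlt
      have he : (a + ((1:ℤ) : Fin n)) - b = (((p+1) : ℕ) : Fin n) := by
        rw [show (a + ((1:ℤ):Fin n)) - b = (a - b) + ((1:ℤ):Fin n) by ring, hab']
        push_cast; ring
      have := cd_eq_of_natCast (a := b) (b := a + ((1:ℤ):Fin n)) he hlt
      rw [cd_comm] at this
      rw [← this]
      exact hw13
    have hcd2 : min (p-1) (n - (p-1)) ≤ f b := by
      have he : (a + ((-1:ℤ) : Fin n)) - b = (((p-1) : ℕ) : Fin n) := by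
        rw [show (a + ((-1:ℤ):Fin n)) - b = (a - b) + ((-1:ℤ):Fin n) by ring, hab']
        rw [show (((p-1) : ℕ) : Fin n) = (((p:ℕ) - 1 : ℤ) : Fin n) by push_cast [Nat.cast_sub (by omega : 1 ≤ p)]; ring]
        push_cast; ring
      have := cd_eq_of_natCast (a := b) (b := a + ((-1:ℤ):Fin n)) he (by omega)
      rw [cd_comm] at this
      rw [← this]
      exact hw23
    have hfbk := hfk b
    by_cases hpn : p + 1 < n
    · have := hcd1 hpn
      omega
    · omega
  have hsingle : ∀ a b : Fin n, supp = {a, b} → (∀ w ∈ supp, w ≠ a → w = b) := by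
    intro a b hsab w hwmem hwa
    rw [hsab] at hwmem
    simp only [Finset.mem_insert, Finset.mem_singleton] at hwmem
    tauto
  have hm1 : m v1 ≠ 0 := hnodeg v1 v2 hv1 hv2 hne12 (hsingle v1 v2 hs)
  have hm2 : m v2 ≠ 0 := hnodeg v2 v1 hv2 hv1 (Ne.symm hne12) (hsingle v2 v1 (by rw [hs, Finset.pair_comm]))
  have hmf1 : m v1 = f v1 := hnorm v1 hv1 hm1
  have hmf2 : m v2 = f v2 := hnorm v2 hv2 hm2
  -- the two arcs tile the cycle
  have huniv : supp.biUnion T = Finset.univ := by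
    apply Finset.eq_univ_of_card
    rw [Finset.card_biUnion hdisj, Fintype.card_fin]
    calc (∑ v ∈ supp, (T v).card) = ∑ v ∈ supp, (f v + 1) :=
          Finset.sum_congr rfl (fun v hv => hTcard v hv)
      _ = (f v1 + 1) + (f v2 + 1) := by
          rw [hs, Finset.sum_insert (by simpa using hne12), Finset.sum_singleton]
      _ = n := by omega
  have hmemT : ∀ x : Fin n, x ∈ T v1 ∨ x ∈ T v2 := by
    intro x
    have : x ∈ supp.biUnion T := by rw [huniv]; exact Finset.mem_univ x
    rw [Finset.mem_biUnion] at this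
    obtain ⟨a, ha, hx⟩ := this
    rw [hs] at ha
    simp only [Finset.mem_insert, Finset.mem_singleton] at ha
    rcases ha with rfl | rfl
    · exact Or.inl hx
    · exact Or.inr hx
  have hTS : ∀ a : Fin n, m a ≠ 0 → T a = S a := by
    intro a ha; simp only [hT]; exact if_neg ha
  -- one-past-the-end points
  have hnotin : ∀ a ∈ supp, m a ≠ 0 → pt a (ε a) (f a + 1) ∉ S a := by
    intro a ha hma0 hmem
    obtain ⟨i, hi, hpi⟩ := (mem_S a _).mp hmem
    unfold pt at hpi
    have h2 : ((ε a * i : ℤ) : Fin n) = ((ε a * (f a + 1) : ℤ) : Fin n) := add_left_cancel hpi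
    have h3 : ((ε a * i - ε a * (f a + 1) : ℤ) : Fin n) = 0 := by
      push_cast
      rw [show ((ε a : Fin n) * ((i:ℕ)) : Fin n) = ((ε a * i : ℤ) : Fin n) by push_cast; ring]
      rw [h2]
      push_cast; ring
    have hm := hmle a ha
    have hfka := hfk a
    have h4 : (ε a * i - ε a * (f a + 1) : ℤ).natAbs < n := by
      rcases hε a with he | he <;> rw [he] <;> omega
    have := intCast_fin_eq_zero h3 h4
    rcases hε a with he | he <;> rw [he] at this <;> omega
  -- x := one past u1 lands in S v2
  set x : Fin n := pt v1 (ε v1) (f v1 + 1) with hx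
  have hxS2 : x ∈ S v2 := by
    rcases hmemT x with h | h
    · exfalso
      exact hnotin v1 hv1 hm1 (by rwa [hTS v1 hm1] at h)
    · rwa [hTS v2 hm2] at h
  obtain ⟨j, hj, hpj⟩ := (mem_S v2 x).mp hxS2
  have hjf2 : j ≤ f v2 := by omega
  set u1 : Fin n := pt v1 (ε v1) (m v1) with hu1
  set u2 : Fin n := pt v2 (ε v2) (m v2) with hu2
  have hpriv1 : Priv f v1 u1 := hpriv v1 hv1
  have hpriv2 : Priv f v2 u2 := hpriv v2 hv2
  -- first interface: u1 - v2 representative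
  have hrel1 : u1 - v2 = ((ε v2 * j - ε v1 : ℤ) : Fin n) := by
    have hxv2 : x - v2 = ((ε v2 * j : ℤ) : Fin n) := by
      rw [← hpj]; unfold pt; ring
    have h5 : u1 - x = ((-(ε v1) : ℤ) : Fin n) := by
      rw [hu1, hx, hmf1]; unfold pt; push_cast; ring
    calc u1 - v2 = (u1 - x) + (x - v2) := by ring
      _ = _ := by rw [h5, hxv2]; push_cast; ring
  have hA := cd_le_of_intCast hrel1
  have hA' : f v2 < cd v2 u1 := by rw [cd_comm]; exact hpriv1 v2 hf2 (Ne.symm hne12)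
  have hkey : ε v2 = -ε v1 ∧ j = f v2 := by
    rcases hε v1 with he1 | he1 <;> rcases hε v2 with he2 | he2 <;>
      rw [he1, he2] at hA ⊢ <;>
      first
        | (exfalso; omega)
        | exact ⟨by norm_num, by omega⟩
  have hu2x : u2 = x := by
    rw [hu2, hmf2, ← hkey.2, hpj]
  -- exact distance of u2 from v1
  have hrel2 : u2 - v1 = ((ε v1 * (f v1 + 1) : ℤ) : Fin n) := by
    rw [hu2x, hx]; unfold pt; push_cast; ring
  have hcdu2v1 : cd v1 u2 = min (f v1 + 1) (n - (f v1 + 1)) := by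
    rcases hε v1 with he1 | he1
    · apply cd_eq_of_natCast (m := f v1 + 1)
      · rw [hrel2, he1]; push_cast; ring
      · have := hfk v1; omega
    · rw [cd_comm]
      apply cd_eq_of_natCast (m := f v1 + 1)
      · rw [show v1 - u2 = -(u2 - v1) by ring, hrel2, he1]; push_cast; ring
      · have := hfk v1; omega
  have hB' : f v1 < cd v1 u2 := by rw [cd_comm]; exact hpriv2 v1 hf1 hne12
  have hf12 : f v1 ≤ f v2 := by
    rw [hcdu2v1] at hB'
    omega
  -- second interface
  set y : Fin n := pt v2 (ε v2) (f v2 + 1) with hy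
  have hyS1 : y ∈ S v1 := by
    rcases hmemT y with h | h
    · rwa [hTS v1 hm1] at h
    · exfalso
      exact hnotin v2 hv2 hm2 (by rwa [hTS v2 hm2] at h)
  obtain ⟨i, hi, hpi⟩ := (mem_S v1 y).mp hyS1
  have hif1 : i ≤ f v1 := by omega
  have hrel3 : u2 - v1 = ((ε v1 * i + ε v1 : ℤ) : Fin n) := by
    have hyv1 : y - v1 = ((ε v1 * i : ℤ) : Fin n) := by
      rw [← hpi]; unfold pt; ring
    have h5 : u2 - y = ((ε v1 : ℤ) : Fin n) := by
      rw [hu2, hy, hmf2, hkey.1]; unfold pt; push_cast; ring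
    calc u2 - v1 = (u2 - y) + (y - v1) := by ring
      _ = _ := by rw [h5, hyv1]; push_cast; ring
  have hC := cd_le_of_intCast hrel3
  have hif : i = f v1 := by
    rcases hε v1 with he1 | he1 <;> rw [he1] at hC <;> rw [hcdu2v1] at hB' <;>
      (have := hfk v1; have := hfk v2; omega)
  have hyu1 : y = u1 := by
    rw [← hpi, hif, hu1, hmf1]
  -- exact distance of u1 from v2
  have hrel4 : u1 - v2 = ((ε v2 * (f v2 + 1) : ℤ) : Fin n) := by
    rw [← hyu1, hy]; unfold pt; push_cast; ring
  have hcdu1v2 : cd v2 u1 = min (f v2 + 1) (n - (f v2 + 1)) := by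
    rcases hε v2 with he2 | he2
    · apply cd_eq_of_natCast (m := f v2 + 1)
      · rw [hrel4, he2]; push_cast; ring
      · have := hfk v2; omega
    · rw [cd_comm]
      apply cd_eq_of_natCast (m := f v2 + 1)
      · rw [show v2 - u1 = -(u1 - v2) by ring, hrel4, he2]; push_cast; ring
      · have := hfk v2; omega
  rw [hcdu1v2] at hA'
  rw [hcdu2v1] at hB'
  omega

end CycleAux

/-- For every odd `n ≥ 5`, `Γ_b(C_n) = n - 3`. -/
theorem upperBroadcast_cycle_odd (n : ℕ) (hn : 5 ≤ n) (hodd : Odd n) :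
    upperBroadcast (cycleGraph n) = n - 3 := by
  haveI : NeZero n := ⟨by omega⟩
  obtain ⟨k, hk⟩ := hodd
  have hn' : n = 2 * k + 1 := by omega
  have hk2 : 2 ≤ k := by omega
  have hub : (n - 3) ∈ upperBounds
      {c : ℕ | ∃ f : Fin n → ℕ, MinimalDominatingBroadcast (cycleGraph n) f ∧ cost f = c} := by
    rintro c ⟨f, hf, rfl⟩
    exact cycle_upper hn' hk2 f hf
  obtain ⟨f, hf, hc⟩ := cycle_lower hn' hk2
  unfold upperBroadcast
  apply le_antisymm
  · exact csSup_le' hub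
  · exact le_csSup ⟨n - 3, hub⟩ ⟨f, hf, hc⟩
end

section
/- For every integer n ≥ 3, the cycle C_n is diametrical (i.e. Γ_b(C_n) = diam(C_n)) if and only if n = 3, n = 4, or n = 5. -/
open SimpleGraph Finset

/-! ### Distance in the cycle graph -/

private lemma step_min (n b x : ℕ) (hn : 2 ≤ n) (hb : b < n)
    (hx : x = (b + 1) % n ∨ x = (b + (n - 1)) % n) :
    min x (n - x) ≤ min b (n - b) + 1 := by
  rcases hx with rfl | rfl
  · rcases Nat.lt_or_ge (b + 1) n with h | h
    · rw [Nat.mod_eq_of_lt h]; omega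
    · have e : b + 1 = n := by omega
      rw [e, Nat.mod_self]; omega
  · rcases Nat.eq_zero_or_pos b with rfl | h
    · rw [Nat.mod_eq_of_lt (by omega)]; omega
    · have e : b + (n - 1) = n + (b - 1) := by omega
      rw [e, Nat.add_mod_left, Nat.mod_eq_of_lt (by omega)]; omega

private lemma fin_val_sum_zero {n : ℕ} [NeZero n] {a b : Fin n} (h : a + b = 0) :
    (a.val + b.val) % n = 0 := by
  have h' := congrArg Fin.val h
  rw [Fin.add_def] at h'
  simpa using h'

private lemma sum_mod_eq {n a b : ℕ} (hn : 0 < n) (ha : a < n) (hb : b < n)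
    (h : (a + b) % n = 0) : a + b = 0 ∨ a + b = n := by
  rcases Nat.lt_or_ge (a + b) n with hlt | hge
  · left; rwa [Nat.mod_eq_of_lt hlt] at h
  · right
    have e : a + b = n + (a + b - n) := by omega
    rw [e, Nat.add_mod_left, Nat.mod_eq_of_lt (by omega)] at h
    omega

private lemma cycle_walk_lb (n : ℕ) (hn : 2 ≤ n) :
    ∀ {u v : Fin n} (p : (cycleGraph n).Walk u v),
      min ((v - u).val) (n - (v - u).val) ≤ p.length := by
  haveI : NeZero n := ⟨by omega⟩
  intro u v p
  induction p with
  | nil => simp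
  | @cons u w v h q ih =>
    rw [Walk.length_cons]
    have key : min ((v - u).val) (n - (v - u).val)
        ≤ min ((v - w).val) (n - (v - w).val) + 1 := by
      refine step_min n ((v - w).val) ((v - u).val) hn (v - w).isLt ?_
      have hsum : v - u = (v - w) + (w - u) := (sub_add_sub_cancel v w u).symm
      rcases cycleGraph_adj'.mp h with h1 | h1
      · right
        have h0 : ((u - w) + (w - u)) = 0 := by
          rw [sub_add_sub_cancel, sub_self]
        have h0' := fin_val_sum_zero h0
        have hlt1 : (u - w).val < n := (u - w).isLt
        have hlt2 : (w - u).val < n := (w - u).isLt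
        have hk := sum_mod_eq (by omega) hlt1 hlt2 h0'
        have hwu : (w - u).val = n - 1 := by omega
        rw [hsum, Fin.add_def]
        simp [hwu]
      · left
        rw [hsum, Fin.add_def]
        simp [h1]
    omega

private lemma cycle_conn (n : ℕ) (hn : 1 ≤ n) : (cycleGraph n).Connected := by
  have e : n - 1 + 1 = n := by omega
  exact e ▸ (cycleGraph_connected (n := n - 1))

private lemma cycle_walk_ub (n : ℕ) (hn : 2 ≤ n) :
    ∀ (k : ℕ) (u v : Fin n), (v - u).val = k → (cycleGraph n).dist u v ≤ k := by
  haveI : NeZero n := ⟨by omega⟩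
  have hconn := cycle_conn n (by omega)
  intro k
  induction k with
  | zero =>
    intro u v h
    have hvu : v - u = 0 := Fin.ext (by simpa using h)
    have : v = u := sub_eq_zero.mp hvu
    subst this
    simp
  | succ k ih =>
    intro u v h
    set o : Fin n := ⟨1, by omega⟩ with ho
    set w : Fin n := v - o with hw
    have hwv : v - w = o := by rw [hw, sub_sub_cancel]
    have hkv : (v - u).val < n := (v - u).isLt
    have hwu : (w - u).val = k := by
      have hrc : w - u = (v - u) - o := by rw [hw]; exact sub_right_comm v o u
      rw [hrc, Fin.sub_def]
      simp only [ho]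
      rw [h]
      have e : n - 1 + (k + 1) = n + k := by omega
      rw [e, Nat.add_mod_left, Nat.mod_eq_of_lt (by omega)]
    have hadj : (cycleGraph n).Adj w v := by
      rw [cycleGraph_adj']
      right
      rw [hwv]
    calc (cycleGraph n).dist u v ≤ (cycleGraph n).dist u w + (cycleGraph n).dist w v :=
          hconn.dist_triangle
      _ ≤ k + 1 := by
          have h1 : (cycleGraph n).dist u w ≤ k := ih u w hwu
          have h2 : (cycleGraph n).dist w v ≤ 1 := SimpleGraph.dist_le (Walk.cons hadj Walk.nil)
          omega

private lemma cycle_dist_s9 (n : ℕ) (hn : 2 ≤ n) (u v : Fin n) :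
    (cycleGraph n).dist u v = min ((v - u).val) (n - (v - u).val) := by
  haveI : NeZero n := ⟨by omega⟩
  refine le_antisymm ?_ ?_
  · have h1 : (cycleGraph n).dist u v ≤ (v - u).val := cycle_walk_ub n hn _ u v rfl
    have h2 : (cycleGraph n).dist u v ≤ (u - v).val := by
      rw [SimpleGraph.dist_comm]; exact cycle_walk_ub n hn _ v u rfl
    rcases eq_or_ne u v with rfl | hne
    · simp
    · have heq : (u - v).val = n - (v - u).val := by
        have h0 : ((u - v) + (v - u)) = 0 := by rw [sub_add_sub_cancel, sub_self]
        have h0' := fin_val_sum_zero h0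
        have hvu : (v - u).val ≠ 0 := by
          intro hh
          exact hne (sub_eq_zero.mp (Fin.ext (by simpa using hh))).symm
        have hl1 := (u - v).isLt
        have hl2 := (v - u).isLt
        have hk := sum_mod_eq (by omega) hl1 hl2 h0'
        omega
      omega
  · obtain ⟨p, hp⟩ := (cycle_conn n (by omega)).exists_walk_length_eq_dist u v
    rw [← hp]
    exact cycle_walk_lb n hn p

/-- Computable cyclic distance. -/
private def cdist (n : ℕ) (u v : Fin n) : ℕ := min ((v - u).val) (n - (v - u).val)

private lemma cycle_dist_cdist (n : ℕ) (hn : 2 ≤ n) (u v : Fin n) :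
    (cycleGraph n).dist u v = cdist n u v := cycle_dist_s9 n hn u v

/-- `if`-style value formula for the cycle distance. -/
private lemma cycle_dist_val (n : ℕ) (hn : 2 ≤ n) (u v : Fin n) :
    (cycleGraph n).dist u v =
      if u.val ≤ v.val then min (v.val - u.val) (n - (v.val - u.val))
      else min (n - u.val + v.val) (u.val - v.val) := by
  rw [cycle_dist_s9 n hn, Fin.sub_def]
  have hu := u.isLt
  have hv := v.isLt
  simp only []
  rcases le_or_gt u.val v.val with h | h
  · rw [if_pos h]
    have e : n - u.val + v.val = n + (v.val - u.val) := by omega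
    rw [e, Nat.add_mod_left, Nat.mod_eq_of_lt (by omega)]
  · rw [if_neg (by omega)]
    rw [Nat.mod_eq_of_lt (by omega)]
    have e : n - (n - u.val + v.val) = u.val - v.val := by omega
    rw [e]

private lemma cycle_ecc (n : ℕ) (hn : 3 ≤ n) (v : Fin n) :
    _root_.eccent (cycleGraph n) v = n / 2 := by
  haveI : NeZero n := ⟨by omega⟩
  apply le_antisymm
  · apply Finset.sup_le
    intro u _
    rw [cycle_dist_val n (by omega)]
    have hu := u.isLt
    have hv := v.isLt
    split_ifs <;> omega
  · have hmem : (v + ⟨n / 2, by omega⟩ : Fin n) ∈ (univ : Finset (Fin n)) := mem_univ _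
    have hd : (cycleGraph n).dist v (v + ⟨n / 2, by omega⟩) = n / 2 := by
      rw [cycle_dist_s9 n (by omega)]
      rw [add_sub_cancel_left]
      simp only []
      omega
    calc n / 2 = (cycleGraph n).dist v (v + ⟨n / 2, by omega⟩) := hd.symm
      _ ≤ _ := Finset.le_sup hmem

private lemma cycle_diam (n : ℕ) (hn : 3 ≤ n) : gDiam (cycleGraph n) = n / 2 := by
  haveI : Nonempty (Fin n) := ⟨⟨0, by omega⟩⟩
  unfold gDiam
  rw [Finset.sup_congr rfl (fun v _ => cycle_ecc n hn v)]
  exact Finset.sup_const Finset.univ_nonempty _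

private lemma cycle_dist_le (n : ℕ) (hn : 3 ≤ n) (u v : Fin n) :
    (cycleGraph n).dist u v ≤ n / 2 := by
  rw [cycle_dist_val n (by omega)]
  have hu := u.isLt
  have hv := v.isLt
  split_ifs <;> omega

/-! ### Cost of simple broadcasts -/

private lemma cost_single {n : ℕ} (p : Fin n) (a : ℕ) :
    cost (fun v => if v = p then a else 0) = a := by
  simp [cost, Finset.sum_ite_eq']

private lemma cost_bound (n : ℕ) (hn : 3 ≤ n) (f : Fin n → ℕ)
    (hf : IsBroadcast (cycleGraph n) f) : cost f ≤ n * (n / 2) := by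
  calc cost f = ∑ v, f v := rfl
    _ ≤ ∑ _v : Fin n, n / 2 := by
        apply Finset.sum_le_sum
        intro v _
        calc f v ≤ _root_.eccent (cycleGraph n) v := hf v
          _ = n / 2 := cycle_ecc n hn v
    _ = n * (n / 2) := by simp [mul_comm]

/-! ### The single-vertex broadcast of radius `n/2` is minimal dominating -/

private lemma single_mdb (n : ℕ) (hn : 3 ≤ n) (p : Fin n) :
    MinimalDominatingBroadcast (cycleGraph n) (fun v => if v = p then n / 2 else 0) := by
  haveI : NeZero n := ⟨by omega⟩
  refine ⟨?_, ?_, ?_⟩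
  · intro v
    rw [cycle_ecc n hn]
    show (if v = p then n / 2 else 0) ≤ n / 2
    by_cases hv : v = p
    · rw [if_pos hv]
    · rw [if_neg hv]; omega
  · intro u
    refine ⟨p, ?_, ?_⟩
    · show 1 ≤ if p = p then n / 2 else 0
      rw [if_pos rfl]
      omega
    · show (cycleGraph n).dist u p ≤ if p = p then n / 2 else 0
      rw [if_pos rfl]
      exact cycle_dist_le n hn u p
  · intro g hgb hgle hgne hgdom
    have hgz : ∀ v, v ≠ p → g v = 0 := by
      intro v hv
      have h : g v ≤ if v = p then n / 2 else 0 := hgle v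
      have h2 : (if v = p then n / 2 else 0) = 0 := if_neg hv
      show g v = 0
      omega
    have hgp : g p < n / 2 := by
      rcases Nat.lt_or_ge (g p) (n / 2) with h | h
      · exact h
      · exfalso
        apply hgne
        funext v
        show g v = if v = p then n / 2 else 0
        by_cases hv : v = p
        · rw [if_pos hv, hv]
          have h4 : (if p = p then n / 2 else 0) = n / 2 := if_pos rfl
          have h5 : g p ≤ if p = p then n / 2 else 0 := hgle p
          omega
        · rw [if_neg hv]
          exact hgz v hv
    obtain ⟨v, hv1, hv2⟩ := hgdom (p + ⟨n / 2, by omega⟩)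
    have hvp : v = p := by
      by_contra hne
      rw [hgz v hne] at hv1
      omega
    rw [hvp] at hv2
    have hd : (cycleGraph n).dist (p + ⟨n / 2, by omega⟩) p = n / 2 := by
      rw [SimpleGraph.dist_comm, cycle_dist_s9 n (by omega), add_sub_cancel_left]
      simp only []
      omega
    omega

/-! ### Small cases: decidable facts -/

private lemma key3 : ∀ u v : Fin 3, cdist 3 u v ≤ 1 := by decide

private lemma key45 (n : ℕ) (hn : n = 4 ∨ n = 5) :
    ∀ a b c : Fin n, a ≠ b → a ≠ c → b ≠ c →
      ∃ p q z : Fin n, (p = a ∨ p = b ∨ p = c) ∧ (q = a ∨ q = b ∨ q = c) ∧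
        (z = a ∨ z = b ∨ z = c) ∧ p ≠ q ∧ z ≠ p ∧ z ≠ q ∧
        ∀ u : Fin n, cdist n u p ≤ 1 ∨ cdist n u q ≤ 1 := by
  rcases hn with rfl | rfl <;> decide

/-! ### Upper bounds on minimal broadcast costs for n = 3, 4, 5 -/

private lemma upper_le_3 (f : Fin 3 → ℕ)
    (hf : MinimalDominatingBroadcast (cycleGraph 3) f) : cost f ≤ 1 := by
  obtain ⟨hb, hd, hmin⟩ := hf
  by_contra hcon
  push_neg at hcon
  obtain ⟨v, hv1, -⟩ := hd 0
  set g : Fin 3 → ℕ := fun w => if w = v then 1 else 0 with hg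
  refine hmin g ?_ ?_ ?_ ?_
  · intro w
    rw [cycle_ecc 3 (by omega)]
    simp only [hg]
    split_ifs <;> omega
  · intro w
    simp only [hg]
    split_ifs with h
    · subst h; omega
    · omega
  · intro he
    have : cost f = 1 := by rw [← he, hg, cost_single]
    omega
  · intro u
    refine ⟨v, by simp [hg], ?_⟩
    simp only [hg, if_pos rfl]
    rw [cycle_dist_cdist 3 (by omega)]
    exact key3 u v

private lemma upper_le_45 (n : ℕ) (hn45 : n = 4 ∨ n = 5) (f : Fin n → ℕ)
    (hf : MinimalDominatingBroadcast (cycleGraph n) f) : cost f ≤ 2 := by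
  have hn : 3 ≤ n := by omega
  have hhalf : n / 2 = 2 := by omega
  obtain ⟨hb, hd, hmin⟩ := hf
  by_contra hcon
  push_neg at hcon
  by_cases hc : ∃ v, 2 ≤ f v
  · obtain ⟨v, hv⟩ := hc
    set g : Fin n → ℕ := fun w => if w = v then 2 else 0 with hg
    refine hmin g ?_ ?_ ?_ ?_
    · intro w
      rw [cycle_ecc n hn, hhalf]
      simp only [hg]
      split_ifs <;> omega
    · intro w
      simp only [hg]
      split_ifs with h
      · subst h; omega
      · omega
    · intro he
      have : cost f = 2 := by rw [← he, hg, cost_single]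
      omega
    · intro u
      refine ⟨v, by simp [hg], ?_⟩
      simp only [hg, if_pos rfl]
      have := cycle_dist_le n hn u v
      omega
  · push_neg at hc
    set T : Finset (Fin n) := univ.filter (fun v => 1 ≤ f v) with hT
    have hTcard : 3 ≤ T.card := by
      have h3 : cost f ≤ T.card := by
        calc cost f = ∑ v, f v := rfl
          _ ≤ ∑ v, (if v ∈ T then 1 else 0) := by
              apply Finset.sum_le_sum
              intro v _
              by_cases hv : v ∈ T
              · rw [if_pos hv]; have := hc v; omega
              · rw [if_neg hv]
                have hfv : ¬ 1 ≤ f v := fun hcon =>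
                  hv (Finset.mem_filter.mpr ⟨Finset.mem_univ v, hcon⟩)
                omega
          _ = T.card := by
              rw [Finset.sum_ite_mem, Finset.univ_inter, Finset.sum_const, smul_eq_mul, mul_one]
      omega
    obtain ⟨a, b, c, ha, hbm, hcm, hab, hac, hbc⟩ := Finset.two_lt_card_iff.mp (show 2 < T.card by omega)
    obtain ⟨p, q, z, hp, hq, hz, hpq, hzp, hzq, hdom⟩ := key45 n hn45 a b c hab hac hbc
    have hmemf : ∀ w : Fin n, (w = a ∨ w = b ∨ w = c) → 1 ≤ f w := by
      rintro w (rfl | rfl | rfl)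
      · exact (Finset.mem_filter.mp ha).2
      · exact (Finset.mem_filter.mp hbm).2
      · exact (Finset.mem_filter.mp hcm).2
    set g : Fin n → ℕ := fun w => if w = p ∨ w = q then 1 else 0 with hg
    refine hmin g ?_ ?_ ?_ ?_
    · intro w
      rw [cycle_ecc n hn, hhalf]
      simp only [hg]
      split_ifs <;> omega
    · intro w
      simp only [hg]
      split_ifs with h
      · rcases h with rfl | rfl
        · exact hmemf w hp
        · exact hmemf w hq
      · omega
    · intro he
      have h1 : g z = 0 := by simp [hg, hzp, hzq]
      have h2 : 1 ≤ f z := hmemf z hz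
      rw [he] at h1
      omega
    · intro u
      rcases hdom u with h | h
      · refine ⟨p, ?_, ?_⟩
        · simp [hg]
        · simp only [hg, if_pos (Or.inl rfl)]
          rw [cycle_dist_cdist n (by omega)]
          exact h
      · refine ⟨q, ?_, ?_⟩
        · simp [hg]
        · simp only [hg, if_pos (Or.inr rfl)]
          rw [cycle_dist_cdist n (by omega)]
          exact h

/-! ### sSup computations -/

private lemma diam_mem (n : ℕ) (hn : 3 ≤ n) :
    n / 2 ∈ {k : ℕ | ∃ f : Fin n → ℕ,
      MinimalDominatingBroadcast (cycleGraph n) f ∧ cost f = k} := by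
  refine ⟨fun v => if v = ⟨0, by omega⟩ then n / 2 else 0,
    single_mdb n hn ⟨0, by omega⟩, cost_single _ _⟩

private lemma bdd (n : ℕ) (hn : 3 ≤ n) :
    BddAbove {k : ℕ | ∃ f : Fin n → ℕ,
      MinimalDominatingBroadcast (cycleGraph n) f ∧ cost f = k} := by
  refine ⟨n * (n / 2), ?_⟩
  rintro k ⟨f, hf, rfl⟩
  exact cost_bound n hn f hf.1

private lemma upper_eq_of (n : ℕ) (hn : 3 ≤ n)
    (hbound : ∀ f : Fin n → ℕ,
      MinimalDominatingBroadcast (cycleGraph n) f → cost f ≤ n / 2) :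
    upperBroadcast (cycleGraph n) = n / 2 := by
  apply le_antisymm
  · apply csSup_le ⟨n / 2, diam_mem n hn⟩
    rintro k ⟨f, hf, rfl⟩
    exact hbound f hf
  · exact le_csSup (bdd n hn) (diam_mem n hn)

/-! ### Two-tower construction for n ≥ 6 -/

private lemma two_tower (n : ℕ) (hn : 3 ≤ n) (p m : Fin n) (hpm : p ≠ m) (a b : ℕ)
    (ha1 : 1 ≤ a) (hb1 : 1 ≤ b) (ha : a ≤ n / 2) (hb : b ≤ n / 2)
    (hC : ∀ u : Fin n, (cycleGraph n).dist u p ≤ a ∨ (cycleGraph n).dist u m ≤ b)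
    (hP0 : ∃ u, a ≤ (cycleGraph n).dist u p ∧ b < (cycleGraph n).dist u m)
    (hPm : ∃ u, b ≤ (cycleGraph n).dist u m ∧ a < (cycleGraph n).dist u p) :
    MinimalDominatingBroadcast (cycleGraph n)
      (fun v => if v = p then a else if v = m then b else 0) ∧
    cost (fun v => if v = p then a else if v = m then b else 0) = a + b := by
  set f : Fin n → ℕ := fun v => if v = p then a else if v = m then b else 0 with hfdef
  have hfp : f p = a := by simp [hfdef]
  have hfm : f m = b := by simp [hfdef, Ne.symm hpm, hpm]
  constructor
  · refine ⟨?_, ?_, ?_⟩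
    · intro v
      rw [cycle_ecc n hn]
      simp only [hfdef]
      split_ifs <;> omega
    · intro u
      rcases hC u with h | h
      · exact ⟨p, by omega, by omega⟩
      · exact ⟨m, by omega, by omega⟩
    · intro g hgb hgle hgne hgdom
      have hgz : ∀ v, v ≠ p → v ≠ m → g v = 0 := by
        intro v hv1 hv2
        have := hgle v
        simp only [hfdef, if_neg hv1, if_neg hv2] at this
        omega
      have hgp : g p ≤ a := by have := hgle p; rwa [hfp] at this
      have hgm : g m ≤ b := by have := hgle m; rwa [hfm] at this
      have hcase : g p < a ∨ g m < b := by
        by_contra hcon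
        push_neg at hcon
        apply hgne
        funext v
        by_cases hv1 : v = p
        · subst hv1; rw [hfp]; omega
        · by_cases hv2 : v = m
          · subst hv2; rw [hfm]; omega
          · rw [hgz v hv1 hv2]
            simp [hfdef, hv1, hv2]
      rcases hcase with hlt | hlt
      · obtain ⟨u, hu1, hu2⟩ := hP0
        obtain ⟨v, hv1, hv2⟩ := hgdom u
        by_cases h1 : v = p
        · subst h1; omega
        · by_cases h2 : v = m
          · subst h2; omega
          · rw [hgz v h1 h2] at hv1; omega
      · obtain ⟨u, hu1, hu2⟩ := hPm
        obtain ⟨v, hv1, hv2⟩ := hgdom u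
        by_cases h1 : v = p
        · subst h1; omega
        · by_cases h2 : v = m
          · subst h2; omega
          · rw [hgz v h1 h2] at hv1; omega
  · have hsplit : ∀ v, f v = (if v = p then a else 0) + (if v = m then b else 0) := by
      intro v
      simp only [hfdef]
      by_cases hv1 : v = p
      · subst hv1; simp [hpm]
      · by_cases hv2 : v = m
        · subst hv2; simp [hv1]
        · simp [hv1, hv2]
    calc cost f = ∑ v, ((if v = p then a else 0) + (if v = m then b else 0)) := by
          unfold cost; exact Finset.sum_congr rfl (fun v _ => hsplit v)
      _ = a + b := by rw [Finset.sum_add_distrib]; simp [Finset.sum_ite_eq']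

private lemma big_cycle (n : ℕ) (hn : 6 ≤ n) :
    ∃ c, c ∈ {k : ℕ | ∃ f : Fin n → ℕ,
      MinimalDominatingBroadcast (cycleGraph n) f ∧ cost f = k} ∧ n / 2 < c := by
  have hn3 : 3 ≤ n := by omega
  have h2 : (2:ℕ) ≤ n := by omega
  rcases Nat.even_or_odd n with he | ho
  · -- n even : vertices 0 and 1, radii n/2 - 1
    have hpar : n % 2 = 0 := Nat.even_iff.mp he
    obtain ⟨hmdb, hcost⟩ := two_tower n hn3 ⟨0, by omega⟩ ⟨1, by omega⟩
      (by simp [Fin.ext_iff]) (n / 2 - 1) (n / 2 - 1) (by omega) (by omega) (by omega) (by omega)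
      (by
        intro u
        rw [cycle_dist_val n h2, cycle_dist_val n h2]
        have hu := u.isLt
        simp only []
        split_ifs <;> omega)
      (by
        refine ⟨⟨n / 2 + 1, by omega⟩, ?_, ?_⟩ <;>
        · rw [cycle_dist_val n h2]
          simp only []
          split_ifs <;> omega)
      (by
        refine ⟨⟨n / 2, by omega⟩, ?_, ?_⟩ <;>
        · rw [cycle_dist_val n h2]
          simp only []
          split_ifs <;> omega)
    exact ⟨(n / 2 - 1) + (n / 2 - 1), ⟨_, hmdb, hcost⟩, by omega⟩
  · -- n odd : vertices 0 and 2, radii n/2 - 1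
    have hpar : n % 2 = 1 := Nat.odd_iff.mp ho
    obtain ⟨hmdb, hcost⟩ := two_tower n hn3 ⟨0, by omega⟩ ⟨2, by omega⟩
      (by simp [Fin.ext_iff]) (n / 2 - 1) (n / 2 - 1) (by omega) (by omega) (by omega) (by omega)
      (by
        intro u
        rw [cycle_dist_val n h2, cycle_dist_val n h2]
        have hu := u.isLt
        simp only []
        split_ifs <;> omega)
      (by
        refine ⟨⟨n / 2 + 2, by omega⟩, ?_, ?_⟩ <;>
        · rw [cycle_dist_val n h2]
          simp only []
          split_ifs <;> omega)
      (by
        refine ⟨⟨n / 2 + 1, by omega⟩, ?_, ?_⟩ <;>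
        · rw [cycle_dist_val n h2]
          simp only []
          split_ifs <;> omega)
    exact ⟨(n / 2 - 1) + (n / 2 - 1), ⟨_, hmdb, hcost⟩, by omega⟩

/-- For `n ≥ 3`, the cycle `C_n` is diametrical iff `n = 3`, `n = 4`, or `n = 5`. -/
theorem cycle_diametrical_iff (n : ℕ) (hn : 3 ≤ n) :
    upperBroadcast (cycleGraph n) = gDiam (cycleGraph n) ↔ n = 3 ∨ n = 4 ∨ n = 5 := by
  rw [cycle_diam n hn]
  constructor
  · intro h
    by_contra hcon
    push_neg at hcon
    have hn6 : 6 ≤ n := by omega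
    obtain ⟨c, hc, hlt⟩ := big_cycle n hn6
    have : c ≤ upperBroadcast (cycleGraph n) := le_csSup (bdd n hn) hc
    omega
  · rintro (rfl | rfl | rfl)
    · exact upper_eq_of 3 (by omega) (fun f hf => upper_le_3 f hf)
    · exact upper_eq_of 4 (by omega) (fun f hf => upper_le_45 4 (Or.inl rfl) f hf)
    · exact upper_eq_of 5 (by omega) (fun f hf => upper_le_45 5 (Or.inr rfl) f hf)
end

section
/- For all integers m, n with 3 ≤ m ≤ n, the toroidal grid C_m □ C_n is not diametrical; in fact diam(C_m □ C_n) < Γ_b(C_m □ C_n). -/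
open SimpleGraph Finset

open Fin.NatCast Fin.CommRing

lemma cycle_walk (n : ℕ) (i : Fin (n+2)) (k : ℕ) :
    ∃ w : (cycleGraph (n+2)).Walk i (i + (k : Fin (n+2))), w.length = k := by
  induction k with
  | zero => exact ⟨Walk.nil.copy rfl (by simp), by simp⟩
  | succ k ih =>
    obtain ⟨w, hw⟩ := ih
    have hadj : (cycleGraph (n+2)).Adj (i + (k : Fin (n+2))) (i + ((k+1 : ℕ) : Fin (n+2))) := by
      rw [cycleGraph_adj]
      right
      push_cast
      ring
    exact ⟨w.concat hadj, by simp [hw]⟩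

lemma cycle_walk_short (n : ℕ) (u v : Fin (n+2)) :
    ∃ w : (cycleGraph (n+2)).Walk u v, w.length ≤ (n+2)/2 := by
  rcases eq_or_ne u v with rfl | hne
  · exact ⟨Walk.nil, by simp⟩
  · set a := (v - u).val with ha
    set b := (u - v).val with hb
    have h0 : (v - u) + (u - v) = 0 := by ring
    have ha0 : a ≠ 0 := fun h =>
      (sub_ne_zero.mpr hne.symm) (Fin.ext (by simp [← ha, h]))
    have hb0 : b ≠ 0 := fun h =>
      (sub_ne_zero.mpr hne) (Fin.ext (by simp [← hb, h]))
    have hab : a + b = n + 2 := by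
      have hneg : v - u = -(u - v) := by ring
      have hv := congrArg Fin.val hneg
      have h2 : b < n + 2 := (u - v).isLt
      rw [Fin.coe_neg, Nat.mod_eq_of_lt (by omega)] at hv
      omega
    obtain ⟨w1, hw1⟩ := cycle_walk n u a
    obtain ⟨w2, hw2⟩ := cycle_walk n v b
    have e1 : u + (a : Fin (n+2)) = v := by
      rw [ha, Fin.cast_val_eq_self]; ring
    have e2 : v + (b : Fin (n+2)) = u := by
      rw [hb, Fin.cast_val_eq_self]; ring
    rcases le_or_gt a b with h | h
    · exact ⟨w1.copy rfl e1, by rw [Walk.length_copy, hw1]; omega⟩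
    · exact ⟨(w2.copy rfl e2).reverse, by rw [Walk.length_reverse, Walk.length_copy, hw2]; omega⟩


lemma boxProd_dist_le {α β : Type*} (G : SimpleGraph α) (H : SimpleGraph β) {a c : α} {b d : β}
    (w1 : G.Walk a c) (w2 : H.Walk b d) :
    (G □ H).dist (a, b) (c, d) ≤ w1.length + w2.length := by
  have h := SimpleGraph.dist_le ((w1.boxProdLeft H b).append (w2.boxProdRight G c))
  rw [Walk.length_append] at h
  exact h.trans (le_of_eq (congrArg₂ (· + ·) (Walk.length_map _ w1) (Walk.length_map _ w2)))

lemma cycleGraph_adj_val {n : ℕ} {u v : Fin (n+2)} (h : (cycleGraph (n+2)).Adj u v) :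
    u.val = (v.val + 1) % (n+2) ∨ v.val = (u.val + 1) % (n+2) := by
  rw [cycleGraph_adj] at h
  rcases h with h | h
  · left
    have huv : u = v + 1 := (sub_eq_iff_eq_add.mp h).trans (add_comm 1 v)
    rw [huv, Fin.add_def, Fin.val_one]
  · right
    have hvu : v = u + 1 := (sub_eq_iff_eq_add.mp h).trans (add_comm 1 u)
    rw [hvu, Fin.add_def, Fin.val_one]

lemma le_upperBroadcast_of_minimalDominating {V : Type*} [Fintype V] (G : SimpleGraph V)
    (hconn : G.Connected) (hecc : ∀ v, 1 ≤ _root_.eccent G v) (S : Finset V)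
    (hS : MinimalDominating G S) : S.card ≤ upperBroadcast G := by
  classical
  set f : V → ℕ := fun v => if v ∈ S then 1 else 0 with hf
  have hb : IsBroadcast G f := by
    intro v
    by_cases h : v ∈ S <;> simp [hf, h, hecc v]
  have hbd : BroadcastDominates G f := by
    intro u
    rcases hS.1 u with h | ⟨x, hx, hadj⟩
    · exact ⟨u, by simp [hf, h], by rw [SimpleGraph.dist_self]; exact Nat.zero_le _⟩
    · refine ⟨x, by simp [hf, hx], ?_⟩
      rw [SimpleGraph.dist_eq_one_iff_adj.mpr hadj]
      simp [hf, hx]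
  have hmin : MinimalDominatingBroadcast G f := by
    refine ⟨hb, hbd, ?_⟩
    intro g hg hle hne hgd
    set S' : Finset V := S.filter (fun v => 1 ≤ g v) with hS'
    have hsub : S' ⊂ S := by
      rw [Finset.ssubset_iff_of_subset (Finset.filter_subset _ _)]
      have : ∃ v, g v ≠ f v := Function.ne_iff.mp hne
      obtain ⟨v, hv⟩ := this
      have hlt : g v < f v := lt_of_le_of_ne (hle v) hv
      have hvS : v ∈ S := by
        by_contra h
        simp [hf, h] at hlt
      have hfv1 : f v = 1 := by simp [hf, hvS]
      have hgv : g v = 0 := by omega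
      exact ⟨v, hvS, by simp [hS', hgv]⟩
    refine hS.2 S' hsub ?_
    intro u
    obtain ⟨v, hv1, hv2⟩ := hgd u
    have hfv : 1 ≤ f v := le_trans hv1 (hle v)
    have hvS : v ∈ S := by
      by_contra h
      simp [hf, h] at hfv
    have hvS' : v ∈ S' := by simp [hS', hvS, hv1]
    have hd1 : G.dist u v ≤ 1 := le_trans hv2 (le_trans (hle v) (by simp [hf, hvS]))
    interval_cases h : G.dist u v
    · left
      have := (hconn.dist_eq_zero_iff).mp h
      rwa [this]
    · exact Or.inr ⟨v, hvS', SimpleGraph.dist_eq_one_iff_adj.mp h⟩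
  have hcost : cost f = S.card := by
    simp [cost, hf, Finset.sum_ite_mem, Finset.univ_inter]
  have hbdd : BddAbove {k : ℕ | ∃ f : V → ℕ, MinimalDominatingBroadcast G f ∧ cost f = k} := by
    refine ⟨∑ v, eccent G v, ?_⟩
    rintro k ⟨g, hg, rfl⟩
    exact Finset.sum_le_sum fun v _ => hg.1 v
  calc S.card = cost f := hcost.symm
    _ ≤ upperBroadcast G := le_csSup hbdd ⟨f, hmin, rfl⟩

lemma exists_minimalDominating_superset {V : Type*} [Fintype V] (G : SimpleGraph V)
    (I : Finset V) (hI : ∀ x ∈ I, ∀ y ∈ I, ¬ G.Adj x y) :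
    ∃ S : Finset V, I ⊆ S ∧ MinimalDominating G S := by
  classical
  set P : Finset V → Prop := fun T => I ⊆ T ∧ ∀ x ∈ T, ∀ y ∈ T, ¬ G.Adj x y with hP
  have hne : ((univ : Finset V).powerset.filter P).Nonempty :=
    ⟨I, Finset.mem_filter.mpr ⟨Finset.mem_powerset.mpr (Finset.subset_univ _),
      Finset.Subset.refl _, hI⟩⟩
  obtain ⟨S, hSmem, hmax⟩ := Finset.exists_max_image _ Finset.card hne
  rw [Finset.mem_filter] at hSmem
  obtain ⟨-, hIS, hind⟩ := hSmem
  refine ⟨S, hIS, ?_, ?_⟩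
  · -- Dominates
    intro v
    by_cases hv : v ∈ S
    · exact Or.inl hv
    right
    by_contra hcon
    push_neg at hcon
    have hP' : P (insert v S) := by
      constructor
      · exact hIS.trans (Finset.subset_insert _ _)
      · intro x hx y hy h
        rcases Finset.mem_insert.mp hx with rfl | hx1
        · rcases Finset.mem_insert.mp hy with rfl | hy1
          · exact G.irrefl h
          · exact hcon y hy1 h
        · rcases Finset.mem_insert.mp hy with rfl | hy1
          · exact hcon x hx1 h.symm
          · exact hind x hx1 y hy1 h
    have := hmax (insert v S) (Finset.mem_filter.mpr ⟨Finset.mem_powerset.mpr (Finset.subset_univ _), hP'⟩)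
    rw [Finset.card_insert_of_notMem hv] at this
    omega
  · -- Minimal
    intro S' hsub hdom
    obtain ⟨x, hxS, hxS'⟩ := Finset.exists_of_ssubset hsub
    rcases hdom x with h | ⟨u, hu, hadj⟩
    · exact hxS' h
    · exact hind x hxS u (hsub.subset hu) hadj

lemma diag_ne_nat (n x y : ℕ) (hn : 1 ≤ n) (h : y = (x + 1) % (n + 2)) (hx : x < n + 2) :
    (if x = n + 1 then 2 else x % 2) ≠ (if y = n + 1 then 2 else y % 2) := by
  rcases Nat.lt_or_ge x (n + 1) with h1 | h1
  · have hy : y = x + 1 := by rw [h]; exact Nat.mod_eq_of_lt (by omega)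
    split_ifs <;> omega
  · have hx1 : x = n + 1 := by omega
    have h2 : x + 1 = n + 2 := by omega
    have hy : y = 0 := by rw [h, h2, Nat.mod_self]
    split_ifs <;> omega

/-- For `3 ≤ m ≤ n`, the toroidal grid is never diametrical:
`diam(C_m □ C_n) < Γ_b(C_m □ C_n)`. -/
theorem torus_not_diametrical (m n : ℕ) (hm : 3 ≤ m) (hmn : m ≤ n) :
    gDiam (cycleGraph m □ cycleGraph n) < upperBroadcast (cycleGraph m □ cycleGraph n) := by
  classical
  obtain ⟨m, rfl⟩ : ∃ k, m = k + 2 := ⟨m - 2, by omega⟩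
  obtain ⟨n, rfl⟩ : ∃ k, n = k + 2 := ⟨n - 2, by omega⟩
  have hm1 : 1 ≤ m := by omega
  have hn1 : 1 ≤ n := by omega
  have hmn' : m ≤ n := by omega
  have hconn : (cycleGraph (m+2) □ cycleGraph (n+2)).Connected :=
    Connected.boxProd cycleGraph_connected cycleGraph_connected
  have hecc : ∀ v : Fin (m+2) × Fin (n+2), 1 ≤ _root_.eccent (cycleGraph (m+2) □ cycleGraph (n+2)) v := by
    rintro ⟨x, y⟩
    have hadj : (cycleGraph (m+2) □ cycleGraph (n+2)).Adj (x, y) (x + 1, y) :=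
      boxProd_adj.mpr (Or.inl ⟨cycleGraph_adj.mpr (Or.inr (by ring)), rfl⟩)
    calc 1 = (cycleGraph (m+2) □ cycleGraph (n+2)).dist (x, y) (x+1, y) :=
        (SimpleGraph.dist_eq_one_iff_adj.mpr hadj).symm
      _ ≤ _ := Finset.le_sup (Finset.mem_univ _)
  have hdist : ∀ v u : Fin (m+2) × Fin (n+2),
      (cycleGraph (m+2) □ cycleGraph (n+2)).dist v u ≤ (m+2)/2 + (n+2)/2 := by
    rintro ⟨a, b⟩ ⟨c, d⟩
    obtain ⟨w1, hw1⟩ := cycle_walk_short m a c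
    obtain ⟨w2, hw2⟩ := cycle_walk_short n b d
    exact le_trans (boxProd_dist_le _ _ w1 w2) (add_le_add hw1 hw2)
  have hdiam : gDiam (cycleGraph (m+2) □ cycleGraph (n+2)) ≤ (m+2)/2 + (n+2)/2 := by
    unfold gDiam _root_.eccent
    exact Finset.sup_le fun v _ => Finset.sup_le fun u _ => hdist v u
  set r : Fin (n+2) → Fin (m+2) :=
    fun j => ⟨if j.val = n+1 then 2 else j.val % 2, by split <;> omega⟩ with hr
  have hrne : ∀ j k : Fin (n+2), (cycleGraph (n+2)).Adj j k → r j ≠ r k := by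
    intro j k hadj heq
    have hv := congrArg Fin.val heq
    simp only [hr] at hv
    rcases cycleGraph_adj_val hadj with h | h
    · exact diag_ne_nat n k.val j.val hn1 h k.isLt hv.symm
    · exact diag_ne_nat n j.val k.val hn1 h j.isLt hv
  have hdiag : ∀ j k : Fin (n+2),
      ¬ (cycleGraph (m+2) □ cycleGraph (n+2)).Adj (r j, j) (r k, k) := by
    intro j k h
    rcases boxProd_adj.mp h with ⟨h1, h2⟩ | ⟨h1, h2⟩
    · have hjk : j = k := h2
      subst hjk
      exact (cycleGraph (m+2)).irrefl h1
    · exact hrne j k h1 h2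
  set D : Finset (Fin (m+2) × Fin (n+2)) := Finset.image (fun j => (r j, j)) Finset.univ with hD
  have hinj : Function.Injective (fun j : Fin (n+2) => (r j, j)) :=
    fun a b hab => congrArg Prod.snd hab
  have hDcard : D.card = n + 2 := by
    rw [hD, Finset.card_image_of_injective _ hinj]
    simp
  have hDind : ∀ x ∈ D, ∀ y ∈ D, ¬ (cycleGraph (m+2) □ cycleGraph (n+2)).Adj x y := by
    intro x hx y hy
    rw [hD] at hx hy
    obtain ⟨j, -, rfl⟩ := Finset.mem_image.mp hx
    obtain ⟨k, -, rfl⟩ := Finset.mem_image.mp hy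
    exact hdiag j k
  obtain ⟨I, hind, hcard⟩ : ∃ I : Finset (Fin (m+2) × Fin (n+2)),
      (∀ x ∈ I, ∀ y ∈ I, ¬ (cycleGraph (m+2) □ cycleGraph (n+2)).Adj x y) ∧
        (m+2)/2 + (n+2)/2 < I.card := by
    by_cases hcase : (m+2)/2 + (n+2)/2 < n + 2
    · exact ⟨D, hDind, by omega⟩
    · have hme : m = n := by omega
      have he : (n + 2) % 2 = 0 := by omega
      have hm2 : 2 ≤ m := by omega
      set x0 : Fin (m+2) × Fin (n+2) := (⟨3, by omega⟩, ⟨1, by omega⟩) with hx0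
      have hx0D : x0 ∉ D := by
        rw [hD]
        intro hmem
        obtain ⟨j, -, hj⟩ := Finset.mem_image.mp hmem
        have hjv : j.val = 1 := congrArg (fun p => (Prod.snd p).val) hj
        have hj1 : (r j).val = 3 := congrArg (fun p => (Prod.fst p).val) hj
        have hrfl : (r j).val = if j.val = n + 1 then 2 else j.val % 2 := rfl
        rw [hrfl, hjv, if_neg (by omega : ¬ (1:ℕ) = n+1)] at hj1
        omega
      have hx0diag : ∀ j : Fin (n+2),
          ¬ (cycleGraph (m+2) □ cycleGraph (n+2)).Adj x0 (r j, j) := by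
        intro j h
        rcases boxProd_adj.mp h with ⟨h1, h2⟩ | ⟨h1, h2⟩
        · have hjv : j.val = 1 := (congrArg Fin.val h2).symm
          have hrj : (r j).val = if j.val = n+1 then 2 else j.val % 2 := rfl
          rw [hjv] at hrj
          have hrj' : (r j).val = 1 := by
            rw [hrj, if_neg (by omega : ¬ (1 = n + 1))]
          have h4 : (x0.1).val = 3 := rfl
          rcases cycleGraph_adj_val h1 with h3 | h3
          · rw [hrj', h4, Nat.mod_eq_of_lt (by omega : 1 + 1 < m + 2)] at h3
            omega
          · rw [hrj', h4] at h3
            rcases Nat.lt_or_ge 4 (m+2) with h5 | h5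
            · rw [Nat.mod_eq_of_lt h5] at h3
              omega
            · have h6 : m = 2 := by omega
              subst h6
              norm_num at h3
        · have hv := congrArg Fin.val h2
          have h4 : (x0.1).val = 3 := rfl
          have h5 : (r j).val = if j.val = n+1 then 2 else j.val % 2 := rfl
          rw [h4, h5] at hv
          split_ifs at hv <;> omega
      refine ⟨insert x0 D, ?_, ?_⟩
      · intro x hx y hy h
        rcases Finset.mem_insert.mp hx with rfl | hx1
        · rcases Finset.mem_insert.mp hy with rfl | hy1
          · exact (cycleGraph (m+2) □ cycleGraph (n+2)).irrefl h
          · rw [hD] at hy1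
            obtain ⟨j, -, rfl⟩ := Finset.mem_image.mp hy1
            exact hx0diag j h
        · rcases Finset.mem_insert.mp hy with rfl | hy1
          · rw [hD] at hx1
            obtain ⟨j, -, rfl⟩ := Finset.mem_image.mp hx1
            exact hx0diag j h.symm
          · exact hDind x hx1 y hy1 h
      · rw [Finset.card_insert_of_notMem hx0D, hDcard]
        omega
  obtain ⟨S, hIS, hS⟩ := exists_minimalDominating_superset _ I hind
  have h1 := le_upperBroadcast_of_minimalDominating _ hconn hecc S hS
  have h2 : I.card ≤ S.card := Finset.card_le_card hIS
  omega
end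

section
/- For all integers m, n with 1 ≤ m ≤ n, the grid P_m □ P_n is diametrical (i.e. Γ_b(P_m □ P_n) = diam(P_m □ P_n)) if and only if m = 1, or m = 2 and n = 2. -/
open SimpleGraph Finset

lemma pathGraph_conn {n : ℕ} (hn : 1 ≤ n) : (pathGraph n).Connected := by
  obtain ⟨k, rfl⟩ : ∃ k, n = k + 1 := ⟨n - 1, by omega⟩
  exact pathGraph_connected k

lemma path_dist_le {n : ℕ} (i j : Fin n) : (pathGraph n).dist i j ≤ Nat.dist i.val j.val := by
  have hconn : (pathGraph n).Connected := pathGraph_conn (by have := i.isLt; omega)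
  -- aux: if i + k = j then dist ≤ k
  have aux : ∀ (k : ℕ) (a b : Fin n), a.val + k = b.val → (pathGraph n).dist a b ≤ k := by
    intro k
    induction k with
    | zero => intro a b h; have : a = b := Fin.ext (by omega); subst this; simp
    | succ k ih =>
      intro a b h
      have hb := b.isLt
      set a' : Fin n := ⟨a.val + 1, by omega⟩ with ha'
      have hadj : (pathGraph n).Adj a a' := by
        rw [pathGraph_adj]; left; rfl
      calc (pathGraph n).dist a b ≤ (pathGraph n).dist a a' + (pathGraph n).dist a' b :=
            hconn.dist_triangle
        _ ≤ 1 + k := by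
            have h1 : (pathGraph n).dist a a' = 1 := dist_eq_one_iff_adj.mpr hadj
            have h2 : (pathGraph n).dist a' b ≤ k := ih a' b (by simp [ha']; omega)
            omega
        _ = k + 1 := by omega
  rcases le_total i.val j.val with h | h
  · exact le_trans (aux (j.val - i.val) i j (by omega)) (by simp only [Nat.dist]; omega)
  · rw [SimpleGraph.dist_comm]
    exact le_trans (aux (i.val - j.val) j i (by omega)) (by simp only [Nat.dist]; omega)

lemma path_walk_le {n : ℕ} {i j : Fin n} (w : (pathGraph n).Walk i j) :
    Nat.dist i.val j.val ≤ w.length := by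
  induction w with
  | nil => simp
  | cons h p ih =>
    rw [pathGraph_adj] at h
    simp only [SimpleGraph.Walk.length_cons]
    simp [Nat.dist] at ih ⊢
    omega

lemma path_dist {n : ℕ} (i j : Fin n) : (pathGraph n).dist i j = Nat.dist i.val j.val := by
  have hconn : (pathGraph n).Connected := pathGraph_conn (by have := i.isLt; omega)
  refine le_antisymm (path_dist_le i j) ?_
  obtain ⟨w, hw⟩ := (hconn.preconnected i j).exists_walk_length_eq_dist
  rw [← hw]
  exact path_walk_le w


section BoxDist
variable {α β : Type*} {G : SimpleGraph α} {H : SimpleGraph β}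

lemma boxProd_walk_le (hG : G.Connected) (hH : H.Connected) {x y : α × β}
    (w : (G □ H).Walk x y) : G.dist x.1 y.1 + H.dist x.2 y.2 ≤ w.length := by
  induction w with
  | nil => simp
  | @cons u v z h p ih =>
    simp only [SimpleGraph.Walk.length_cons]
    rcases h with ⟨h1, h2⟩ | ⟨h1, h2⟩
    · have t : G.dist u.1 z.1 ≤ 1 + G.dist v.1 z.1 := by
        calc G.dist u.1 z.1 ≤ G.dist u.1 v.1 + G.dist v.1 z.1 := hG.dist_triangle
          _ ≤ 1 + G.dist v.1 z.1 := by
              have := SimpleGraph.dist_eq_one_iff_adj.mpr h1; omega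
      rw [← h2] at ih
      omega
    · have t : H.dist u.2 z.2 ≤ 1 + H.dist v.2 z.2 := by
        calc H.dist u.2 z.2 ≤ H.dist u.2 v.2 + H.dist v.2 z.2 := hH.dist_triangle
          _ ≤ 1 + H.dist v.2 z.2 := by
              have := SimpleGraph.dist_eq_one_iff_adj.mpr h1; omega
      rw [← h2] at ih
      omega

lemma boxProd_dist (hG : G.Connected) (hH : H.Connected) (x y : α × β) :
    (G □ H).dist x y = G.dist x.1 y.1 + H.dist x.2 y.2 := by
  refine le_antisymm ?_ ?_
  · obtain ⟨w1, hw1⟩ := (hG.preconnected x.1 y.1).exists_walk_length_eq_dist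
    obtain ⟨w2, hw2⟩ := (hH.preconnected x.2 y.2).exists_walk_length_eq_dist
    refine le_trans (SimpleGraph.dist_le
      ((w1.boxProdLeft H x.2).append (SimpleGraph.Walk.boxProdRight G y.1 w2))) ?_
    have e1 : (w1.boxProdLeft H x.2).length = w1.length := SimpleGraph.Walk.length_map _ _
    have e2 : (SimpleGraph.Walk.boxProdRight G y.1 w2).length = w2.length := SimpleGraph.Walk.length_map _ _
    rw [SimpleGraph.Walk.length_append, e1, e2, hw1, hw2]
  · obtain ⟨w, hw⟩ := ((hG.boxProd hH).preconnected x y).exists_walk_length_eq_dist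
    rw [← hw]
    exact boxProd_walk_le hG hH w

end BoxDist


lemma grid_dist {m n : ℕ} (x y : Fin m × Fin n) :
    (pathGraph m □ pathGraph n).dist x y
      = Nat.dist x.1.val y.1.val + Nat.dist x.2.val y.2.val := by
  have hm : 1 ≤ m := by have := x.1.isLt; omega
  have hn : 1 ≤ n := by have := x.2.isLt; omega
  rw [boxProd_dist (pathGraph_conn hm) (pathGraph_conn hn), path_dist, path_dist]

lemma grid_gDiam {m n : ℕ} (hm : 1 ≤ m) (hn : 1 ≤ n) :
    gDiam (pathGraph m □ pathGraph n) = (m - 1) + (n - 1) := by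
  apply le_antisymm
  · apply Finset.sup_le
    intro v _
    apply Finset.sup_le
    intro u _
    rw [grid_dist]
    have h1 := v.1.isLt; have h2 := v.2.isLt; have h3 := u.1.isLt; have h4 := u.2.isLt
    simp only [Nat.dist]; omega
  · have h : (pathGraph m □ pathGraph n).dist (⟨0, by omega⟩, (⟨0, by omega⟩ : Fin n))
        (⟨m - 1, by omega⟩, (⟨n - 1, by omega⟩ : Fin n)) = (m - 1) + (n - 1) := by
      rw [grid_dist]; simp only [Nat.dist]; omega
    calc (m-1) + (n-1) ≤ _root_.eccent (pathGraph m □ pathGraph n) (⟨0, by omega⟩, (⟨0, by omega⟩ : Fin n)) := by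
          rw [← h]; exact Finset.le_sup (mem_univ _)
      _ ≤ gDiam _ := Finset.le_sup (mem_univ _)

section Gen
variable {V : Type*} [Fintype V] {G : SimpleGraph V}

lemma costSet_bdd : BddAbove {k : ℕ | ∃ f : V → ℕ, MinimalDominatingBroadcast G f ∧ cost f = k} := by
  refine ⟨∑ v, _root_.eccent G v, ?_⟩
  rintro k ⟨f, ⟨hb, -, -⟩, rfl⟩
  exact Finset.sum_le_sum (fun v _ => hb v)

lemma upperBroadcast_le {B : ℕ}
    (h : ∀ f : V → ℕ, MinimalDominatingBroadcast G f → cost f ≤ B) :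
    upperBroadcast G ≤ B := by
  apply csSup_le'
  rintro k ⟨f, hf, rfl⟩
  exact h f hf

lemma le_upperBroadcast {f : V → ℕ} (hf : MinimalDominatingBroadcast G f) :
    cost f ≤ upperBroadcast G :=
  le_csSup costSet_bdd ⟨f, hf, rfl⟩

lemma dist_le_eccent {v u : V} : G.dist v u ≤ _root_.eccent G v :=
  Finset.le_sup (mem_univ u)

lemma eccent_le_gDiam {v : V} : _root_.eccent G v ≤ gDiam G :=
  Finset.le_sup (mem_univ v)

/-- Γ_b ≥ diam for connected graphs. -/
lemma gDiam_le_upperBroadcast [Nonempty V] (hconn : G.Connected) :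
    gDiam G ≤ upperBroadcast G := by
  classical
  obtain ⟨v, -, hv⟩ := Finset.exists_mem_eq_sup univ univ_nonempty (fun v => _root_.eccent G v)
  have hgd : gDiam G = _root_.eccent G v := hv
  rcases Nat.eq_zero_or_pos (_root_.eccent G v) with h0 | hepos
  · rw [hgd, h0]; exact Nat.zero_le _
  obtain ⟨u, -, hu⟩ := Finset.exists_mem_eq_sup univ univ_nonempty (fun u => G.dist v u)
  have hu' : G.dist v u = _root_.eccent G v := hu.symm
  have hmdb : MinimalDominatingBroadcast G
      (fun w => if w = v then _root_.eccent G v else 0) := by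
    refine ⟨?_, ?_, ?_⟩
    · intro w
      by_cases h : w = v <;> simp [h]
    · intro w
      refine ⟨v, ?_, ?_⟩
      · simp only [if_pos rfl]; exact hepos
      · simp only [if_pos rfl]
        rw [SimpleGraph.dist_comm]
        exact dist_le_eccent
    · intro g hgb hgle hgne hgdom
      have hg0 : ∀ w, w ≠ v → g w = 0 := by
        intro w hw
        have := hgle w
        simpa [hw] using this
      have hgv : g v < _root_.eccent G v := by
        rcases lt_or_eq_of_le (by simpa using hgle v) with h | h
        · exact h
        · exfalso; apply hgne; funext w
          by_cases hw : w = v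
          · subst hw; simp [h]
          · simp [hw, hg0 w hw]
      obtain ⟨w, hw1, hw2⟩ := hgdom u
      by_cases hwv : w = v
      · subst hwv
        rw [SimpleGraph.dist_comm] at hw2
        omega
      · rw [hg0 w hwv] at hw1; omega
  have hcost : cost (fun w => if w = v then _root_.eccent G v else 0) = _root_.eccent G v := by
    simp [cost, Finset.sum_ite_eq' univ v (fun _ => _root_.eccent G v)]
  rw [hgd, ← hcost]
  exact le_upperBroadcast hmdb

end Gen


lemma grid_construction {m n : ℕ} (hm : 2 ≤ m) (hn : 3 ≤ n) :
    m + n - 1 ≤ upperBroadcast (pathGraph m □ pathGraph n) := by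
  classical
  set G := pathGraph m □ pathGraph n with hG
  set u : Fin m × Fin n := (⟨0, by omega⟩, ⟨2, by omega⟩) with hu
  set w : Fin m × Fin n := (⟨m - 1, by omega⟩, ⟨n - 1, by omega⟩) with hw
  have hne : u ≠ w := by
    intro h
    have h1 : (0:ℕ) = m - 1 := congrArg (fun x => x.1.val) h
    omega
  set f : Fin m × Fin n → ℕ := fun x => if x = u then 2 else if x = w then m + n - 3 else 0
    with hf
  have hfu : f u = 2 := by simp [hf]
  have hfw : f w = m + n - 3 := by simp [hf, Ne.symm hne]
  have hf0 : ∀ x, x ≠ u → x ≠ w → f x = 0 := by intro x h1 h2; simp [hf, h1, h2]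
  -- distance computations
  have hd : ∀ x y : Fin m × Fin n, G.dist x y
      = Nat.dist x.1.val y.1.val + Nat.dist x.2.val y.2.val := fun x y => grid_dist x y
  have hmdb : MinimalDominatingBroadcast G f := by
    refine ⟨?_, ?_, ?_⟩
    · -- broadcast
      intro x
      by_cases hxu : x = u
      · subst hxu
        rw [hfu]
        have : G.dist u (⟨m - 1, by omega⟩, (⟨0, by omega⟩ : Fin n)) = (m - 1) + 2 := by
          rw [hd]; simp only [hu, Nat.dist]; omega
        calc 2 ≤ (m - 1) + 2 := by omega
          _ ≤ _root_.eccent G u := by rw [← this]; exact dist_le_eccent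
      · by_cases hxw : x = w
        · subst hxw
          rw [hfw]
          have : G.dist w (⟨0, by omega⟩, (⟨0, by omega⟩ : Fin n)) = (m - 1) + (n - 1) := by
            rw [hd]; simp only [hw, Nat.dist]; omega
          calc m + n - 3 ≤ (m - 1) + (n - 1) := by omega
            _ ≤ _root_.eccent G w := by rw [← this]; exact dist_le_eccent
        · rw [hf0 x hxu hxw]; exact Nat.zero_le _
    · -- dominates
      intro p
      have h1 := p.1.isLt; have h2 := p.2.isLt
      by_cases hp : p.1.val = 0 ∧ p.2.val = 0
      · refine ⟨u, by rw [hfu]; omega, ?_⟩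
        rw [hfu, hd]
        simp only [hu, Nat.dist]; omega
      · refine ⟨w, by rw [hfw]; omega, ?_⟩
        rw [hfw, hd]
        simp only [hw, Nat.dist]; omega
    · -- minimal
      intro g hgb hgle hgne hgdom
      have hg0 : ∀ x, x ≠ u → x ≠ w → g x = 0 := by
        intro x h1 h2
        have h3 : g x ≤ f x := hgle x
        rw [hf0 x h1 h2] at h3; omega
      have hgu : g u ≤ 2 := by have h3 : g u ≤ f u := hgle u; rwa [hfu] at h3
      have hgw : g w ≤ m + n - 3 := by have h3 : g w ≤ f w := hgle w; rwa [hfw] at h3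
      set p0 : Fin m × Fin n := (⟨0, by omega⟩, ⟨0, by omega⟩) with hp0
      set p1 : Fin m × Fin n := (⟨1, by omega⟩, ⟨0, by omega⟩) with hp1
      have d1u : G.dist p0 u = 2 := by rw [hd]; simp only [hp0, hu, Nat.dist]
      have d1w : G.dist p0 w = m + n - 2 := by rw [hd]; simp only [hp0, hw, Nat.dist]; omega
      have d2u : G.dist p1 u = 3 := by rw [hd]; simp only [hp1, hu, Nat.dist]
      have d2w : G.dist p1 w = m + n - 3 := by rw [hd]; simp only [hp1, hw, Nat.dist]; omega
      by_cases hcase : g w = m + n - 3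
      · have hgu2 : g u < 2 := by
          rcases lt_or_eq_of_le hgu with h | h
          · exact h
          · exfalso; apply hgne; funext x
            by_cases h1 : x = u
            · subst h1; rw [hfu, h]
            · by_cases h2 : x = w
              · subst h2; rw [hfw, hcase]
              · rw [hf0 x h1 h2, hg0 x h1 h2]
        obtain ⟨x, hx1, hx2⟩ := hgdom p0
        by_cases h1 : x = u
        · subst h1; rw [d1u] at hx2; omega
        · by_cases h2 : x = w
          · subst h2; rw [d1w] at hx2; omega
          · rw [hg0 x h1 h2] at hx1; omega
      · obtain ⟨x, hx1, hx2⟩ := hgdom p1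
        by_cases h1 : x = u
        · subst h1; rw [d2u] at hx2; omega
        · by_cases h2 : x = w
          · subst h2; rw [d2w] at hx2; omega
          · rw [hg0 x h1 h2] at hx1; omega
  have hcost : cost f = m + n - 1 := by
    have hsplit : ∀ x, f x = (if x = u then 2 else 0) + (if x = w then m + n - 3 else 0) := by
      intro x
      by_cases h1 : x = u
      · subst h1; simp [hf, hne]
      · by_cases h2 : x = w
        · subst h2; simp [hf, Ne.symm hne]
        · simp [hf, h1, h2]
    rw [cost, Finset.sum_congr rfl (fun x _ => hsplit x), Finset.sum_add_distrib,
      Finset.sum_ite_eq' univ u (fun _ => 2), Finset.sum_ite_eq' univ w (fun _ => m + n - 3)]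
    simp only [mem_univ, if_pos]
    omega
  rw [← hcost]
  exact le_upperBroadcast hmdb

lemma ico_minmax_card (a b : ℕ) :
    (Finset.Ico (min a b) (max a b)).card = Nat.dist a b := by
  rcases le_total a b with h | h
  · rw [min_eq_left h, max_eq_right h, Nat.card_Ico]
    simp only [Nat.dist]; omega
  · rw [min_eq_right h, max_eq_left h, Nat.card_Ico]
    simp only [Nat.dist]; omega

lemma mem_ico_minmax {a b e : ℕ} (h : e ∈ Finset.Ico (min a b) (max a b)) :
    (a ≤ e ∧ e < b) ∨ (b ≤ e ∧ e < a) := by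
  rw [Finset.mem_Ico] at h
  rcases le_total a b with h' | h'
  · left; rw [min_eq_left h', max_eq_right h'] at h; exact h
  · right; rw [min_eq_right h', max_eq_left h'] at h; exact h

lemma path_upper {n : ℕ} (f : Fin 1 × Fin n → ℕ)
    (hf : MinimalDominatingBroadcast (pathGraph 1 □ pathGraph n) f) :
    cost f ≤ n - 1 := by
  classical
  set G := pathGraph 1 □ pathGraph n with hG
  obtain ⟨hb, hd, hmin⟩ := hf
  have hdist : ∀ v w : Fin 1 × Fin n, G.dist v w = Nat.dist v.2.val w.2.val := by
    intro v w
    rw [hG, grid_dist]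
    have h1 := v.1.isLt; have h2 := w.1.isLt
    have : Nat.dist v.1.val w.1.val = 0 := by simp only [Nat.dist]; omega
    omega
  by_cases hS0 : ∀ v, f v = 0
  · have : cost f = 0 := by
      rw [cost]; exact Finset.sum_eq_zero (fun v _ => hS0 v)
    omega
  push_neg at hS0
  have hn2 : 2 ≤ n := by
    obtain ⟨v, hv⟩ := hS0
    have h1 : f v ≤ _root_.eccent G v := hb v
    by_contra hc
    push_neg at hc
    have hn1 : n = 1 := by have := v.2.isLt; omega
    have hecc : _root_.eccent G v = 0 := by
      apply Nat.le_zero.mp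
      apply Finset.sup_le
      intro u _
      rw [hdist]
      have := u.2.isLt; have := v.2.isLt
      simp only [Nat.dist]; omega
    omega
  -- witness function
  have key : ∀ v : Fin 1 × Fin n, ∃ p : Fin 1 × Fin n, 1 ≤ f v →
      ((∀ w, w ≠ v → 1 ≤ f w → f w < G.dist p w) ∧ G.dist p v ≤ f v ∧
        (2 ≤ f v → G.dist p v = f v)) := by
    intro v
    by_cases hv : 1 ≤ f v
    · set g : Fin 1 × Fin n → ℕ := fun w => if w = v then f v - 1 else f w with hg
      have hgb : ∀ w, g w ≤ _root_.eccent G w := by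
        intro w
        by_cases h : w = v
        · subst h; simp only [hg, if_pos rfl]
          exact le_trans (Nat.sub_le _ _) (hb w)
        · simp only [hg, if_neg h]; exact hb w
      have hgle : g ≤ f := by
        intro w
        by_cases h : w = v
        · subst h; simp only [hg, if_pos rfl]; exact Nat.sub_le _ _
        · simp only [hg, if_neg h]; exact le_refl _
      have hgne : g ≠ f := by
        intro h
        have := congrFun h v
        simp only [hg, if_pos rfl] at this
        omega
      have hnd := hmin g hgb hgle hgne
      rw [BroadcastDominates] at hnd
      push_neg at hnd
      obtain ⟨p, hp⟩ := hnd
      have hgvv : g v = f v - 1 := by rw [hg]; simp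
      have hgww : ∀ w, w ≠ v → g w = f w := by intro w hw; rw [hg]; simp [hw]
      have hpv : ∀ w, w ≠ v → 1 ≤ f w → f w < G.dist p w := by
        intro w hw hfw
        have h5 := hp w
        rw [hgww w hw] at h5
        exact h5 hfw
      refine ⟨p, fun _ => ⟨hpv, ?_, ?_⟩⟩
      · obtain ⟨w, hw1, hw2⟩ := hd p
        by_cases hwv : w = v
        · subst hwv; exact hw2
        · exact absurd hw2 (not_le_of_gt (hpv w hwv hw1))
      · intro h2
        have h6 := hp v
        rw [hgvv] at h6
        have h3 := h6 (by omega)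
        obtain ⟨w, hw1, hw2⟩ := hd p
        by_cases hwv : w = v
        · subst hwv; omega
        · exact absurd hw2 (not_le_of_gt (hpv w hwv hw1))
    · exact ⟨v, fun h => absurd h hv⟩
  choose q hq using key
  -- edge sets
  set c : Fin 1 × Fin n → ℕ := fun v => v.2.val with hc
  set E : Fin 1 × Fin n → Finset ℕ := fun v =>
    if c (q v) = c v then (if c v < n - 1 then {c v} else {c v - 1})
    else Finset.Ico (min (c v) (c (q v))) (max (c v) (c (q v))) with hE
  set S : Finset (Fin 1 × Fin n) := univ.filter (fun v => f v ≠ 0) with hS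
  have hmemS : ∀ v, v ∈ S ↔ 1 ≤ f v := by
    intro v; rw [hS]; simp only [mem_filter, mem_univ, true_and]; omega
  -- key facts in numeric form
  have K1 : ∀ v ∈ S, ∀ w ∈ S, w ≠ v → f w < Nat.dist (c (q v)) (c w) := by
    intro v hv w hw hwv
    have := ((hq v ((hmemS v).mp hv)).1 w hwv ((hmemS w).mp hw))
    rwa [hdist] at this
  have K2 : ∀ v ∈ S, Nat.dist (c (q v)) (c v) ≤ f v := by
    intro v hv
    have := (hq v ((hmemS v).mp hv)).2.1
    rwa [hdist] at this
  have K3 : ∀ v ∈ S, 2 ≤ f v → Nat.dist (c (q v)) (c v) = f v := by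
    intro v hv h2
    have := (hq v ((hmemS v).mp hv)).2.2 h2
    rwa [hdist] at this
  have K4 : ∀ v ∈ S, (c (q v) ≠ c v ∧ Nat.dist (c (q v)) (c v) = f v)
      ∨ (c (q v) = c v ∧ f v = 1) := by
    intro v hv
    have h1 := (hmemS v).mp hv
    have h2 := K2 v hv
    by_cases hdeg : c (q v) = c v
    · right
      refine ⟨hdeg, ?_⟩
      by_contra hne
      have h3 := K3 v hv (by omega)
      rw [hdeg] at h3
      simp only [Nat.dist] at h3
      omega
    · left
      refine ⟨hdeg, ?_⟩
      rcases Nat.lt_or_ge (f v) 2 with h | h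
      · have : Nat.dist (c (q v)) (c v) ≠ 0 := by
          simp only [Nat.dist]; omega
        omega
      · exact K3 v hv h
  -- cardinality
  have hcard : ∀ v ∈ S, (E v).card = f v := by
    intro v hv
    rcases K4 v hv with ⟨hne', heq⟩ | ⟨hdeg, h1⟩
    · rw [hE]
      simp only [if_neg hne']
      rw [ico_minmax_card, Nat.dist_comm]
      exact heq
    · rw [hE]
      simp only [if_pos hdeg]
      by_cases h : c v < n - 1 <;> simp [h, h1]
  -- subset of range (n-1)
  have hsub : ∀ v ∈ S, E v ⊆ Finset.range (n - 1) := by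
    intro v hv e he
    rw [Finset.mem_range]
    have hvn : c v < n := v.2.isLt
    have hqn : c (q v) < n := (q v).2.isLt
    rw [hE] at he
    by_cases hdeg : c (q v) = c v
    · simp only [if_pos hdeg] at he
      by_cases h : c v < n - 1
      · simp only [if_pos h, Finset.mem_singleton] at he
        omega
      · simp only [if_neg h, Finset.mem_singleton] at he
        omega
    · simp only [if_neg hdeg] at he
      have := mem_ico_minmax he
      omega
  -- disjointness
  have hdisj : ∀ v ∈ S, ∀ w ∈ S, v ≠ w → Disjoint (E v) (E w) := by
    intro v hv w hw hvw
    rw [Finset.disjoint_left]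
    intro e hev hew
    have hfv := (hmemS v).mp hv
    have hfw := (hmemS w).mp hw
    have H1 := K1 v hv w hw (fun h => hvw (h.symm ▸ rfl))
    have H2 := K1 w hw v hv (fun h => hvw (h ▸ rfl))
    have hvn : c v < n := v.2.isLt
    have hwn : c w < n := w.2.isLt
    rcases K4 v hv with ⟨hnev, heqv⟩ | ⟨hdegv, h1v⟩ <;>
      rcases K4 w hw with ⟨hnew, heqw⟩ | ⟨hdegw, h1w⟩
    · -- both nondegenerate
      rw [hE] at hev hew
      simp only [if_neg hnev] at hev
      simp only [if_neg hnew] at hew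
      have mv := mem_ico_minmax hev
      have mw := mem_ico_minmax hew
      simp only [Nat.dist] at H1 H2 heqv heqw
      omega
    · -- v nondeg, w deg
      rw [hE] at hev hew
      simp only [if_neg hnev] at hev
      simp only [if_pos hdegw] at hew
      have mv := mem_ico_minmax hev
      have hew' : e = c w ∧ c w < n - 1 ∨ e = c w - 1 ∧ ¬ c w < n - 1 := by
        by_cases h : c w < n - 1
        · left; simp only [if_pos h, Finset.mem_singleton] at hew; exact ⟨hew, h⟩
        · right; simp only [if_neg h, Finset.mem_singleton] at hew; exact ⟨hew, h⟩
      rw [hdegw] at H2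
      simp only [Nat.dist] at H1 H2 heqv
      omega
    · -- v deg, w nondeg
      rw [hE] at hev hew
      simp only [if_pos hdegv] at hev
      simp only [if_neg hnew] at hew
      have mw := mem_ico_minmax hew
      have hev' : e = c v ∧ c v < n - 1 ∨ e = c v - 1 ∧ ¬ c v < n - 1 := by
        by_cases h : c v < n - 1
        · left; simp only [if_pos h, Finset.mem_singleton] at hev; exact ⟨hev, h⟩
        · right; simp only [if_neg h, Finset.mem_singleton] at hev; exact ⟨hev, h⟩
      rw [hdegv] at H1
      simp only [Nat.dist] at H1 H2 heqw
      omega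
    · -- both degenerate
      rw [hE] at hev hew
      simp only [if_pos hdegv] at hev
      simp only [if_pos hdegw] at hew
      have hev' : e = c v ∧ c v < n - 1 ∨ e = c v - 1 ∧ ¬ c v < n - 1 := by
        by_cases h : c v < n - 1
        · left; simp only [if_pos h, Finset.mem_singleton] at hev; exact ⟨hev, h⟩
        · right; simp only [if_neg h, Finset.mem_singleton] at hev; exact ⟨hev, h⟩
      have hew' : e = c w ∧ c w < n - 1 ∨ e = c w - 1 ∧ ¬ c w < n - 1 := by
        by_cases h : c w < n - 1
        · left; simp only [if_pos h, Finset.mem_singleton] at hew; exact ⟨hew, h⟩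
        · right; simp only [if_neg h, Finset.mem_singleton] at hew; exact ⟨hew, h⟩
      rw [hdegv] at H1
      rw [hdegw] at H2
      simp only [Nat.dist] at H1 H2
      omega
  -- conclude
  have hsum : cost f = ∑ v ∈ S, f v := by
    rw [cost, hS]
    rw [Finset.sum_filter_ne_zero]
  rw [hsum]
  calc ∑ v ∈ S, f v = ∑ v ∈ S, (E v).card := Finset.sum_congr rfl (fun v hv => (hcard v hv).symm)
    _ = (S.biUnion E).card := (Finset.card_biUnion hdisj).symm
    _ ≤ (Finset.range (n - 1)).card := by
        apply Finset.card_le_card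
        rw [Finset.biUnion_subset]
        exact hsub
    _ = n - 1 := Finset.card_range _

lemma two_two_upper (f : Fin 2 × Fin 2 → ℕ)
    (hf : MinimalDominatingBroadcast (pathGraph 2 □ pathGraph 2) f) :
    cost f ≤ 2 := by
  classical
  set G := pathGraph 2 □ pathGraph 2 with hG
  obtain ⟨hb, hd, hmin⟩ := hf
  have hle2 : ∀ u v : Fin 2 × Fin 2, G.dist u v ≤ 2 := by
    intro u v
    rw [hG, grid_dist]
    have := u.1.isLt; have := u.2.isLt; have := v.1.isLt; have := v.2.isLt
    simp only [Nat.dist]; omega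
  have hecc : ∀ v : Fin 2 × Fin 2, _root_.eccent G v ≤ 2 := by
    intro v; exact Finset.sup_le (fun u _ => hle2 v u)
  have hf2 : ∀ v, f v ≤ 2 := fun v => le_trans (hb v) (hecc v)
  -- non-antipodal vertices are within distance 1
  have hnear : ∀ u x : Fin 2 × Fin 2,
      ¬(x.1.val = 1 - u.1.val ∧ x.2.val = 1 - u.2.val) → G.dist u x ≤ 1 := by
    intro u x hne
    rw [hG, grid_dist]
    have := u.1.isLt; have := u.2.isLt; have := x.1.isLt; have := x.2.isLt
    simp only [Nat.dist]; omega
  -- two distinct positive vertices dominate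
  have hdom2 : ∀ (g : Fin 2 × Fin 2 → ℕ) (x y : Fin 2 × Fin 2), x ≠ y →
      1 ≤ g x → 1 ≤ g y → BroadcastDominates G g := by
    intro g x y hxy hgx hgy u
    by_cases hx : x.1.val = 1 - u.1.val ∧ x.2.val = 1 - u.2.val
    · refine ⟨y, hgy, ?_⟩
      have hy : ¬(y.1.val = 1 - u.1.val ∧ y.2.val = 1 - u.2.val) := by
        intro hy
        apply hxy
        have e1 : x.1 = y.1 := Fin.ext (by omega)
        have e2 : x.2 = y.2 := Fin.ext (by omega)
        exact Prod.ext e1 e2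
      have := hnear u y hy
      omega
    · refine ⟨x, hgx, ?_⟩
      have := hnear u x hx
      omega
  by_contra hcost
  push_neg at hcost
  -- find w to delete with two remaining positive, or a radius-2 vertex remaining
  have hdel : ∃ w : Fin 2 × Fin 2, 1 ≤ f w ∧
      BroadcastDominates G (fun t => if t = w then 0 else f t) := by
    by_cases hbig : ∃ v, f v = 2
    · obtain ⟨v, hv⟩ := hbig
      have : ∃ w, w ≠ v ∧ 1 ≤ f w := by
        by_contra hno
        push_neg at hno
        have hz : ∀ w, w ≠ v → f w = 0 := fun w hw => by have := hno w hw; omega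
        have : cost f = f v := by
          rw [cost]
          rw [Finset.sum_eq_single v (fun w _ hw => hz w hw) (by simp)]
        omega
      obtain ⟨w, hwv, hw1⟩ := this
      refine ⟨w, hw1, ?_⟩
      intro u
      refine ⟨v, ?_, ?_⟩
      · simp only [if_neg (Ne.symm hwv)]; omega
      · simp only [if_neg (Ne.symm hwv)]
        rw [hv]; exact hle2 u v
    · push_neg at hbig
      have hone : ∀ v, f v ≤ 1 := by intro v; have := hf2 v; have := hbig v; omega
      set a : Fin 2 × Fin 2 := (0, 0) with ha
      set b : Fin 2 × Fin 2 := (0, 1) with hbv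
      set c : Fin 2 × Fin 2 := (1, 0) with hcv
      set d : Fin 2 × Fin 2 := (1, 1) with hdv
      have hsum : cost f = f a + f b + f c + f d := by
        rw [cost, Fintype.sum_prod_type]
        simp [Fin.sum_univ_two, ha, hbv, hcv, hdv]
        ring
      have hab : a ≠ b := by simp [ha, hbv, Prod.ext_iff, Fin.ext_iff]
      have hac : a ≠ c := by simp [ha, hcv, Prod.ext_iff, Fin.ext_iff]
      have had : a ≠ d := by simp [ha, hdv, Prod.ext_iff, Fin.ext_iff]
      have hbc : b ≠ c := by simp [hbv, hcv, Prod.ext_iff, Fin.ext_iff]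
      have hbd : b ≠ d := by simp [hbv, hdv, Prod.ext_iff, Fin.ext_iff]
      have hcd : c ≠ d := by simp [hcv, hdv, Prod.ext_iff, Fin.ext_iff]
      have h1a := hone a; have h1b := hone b; have h1c := hone c; have h1d := hone d
      -- at least three of them are 1
      by_cases hfa : f a = 0
      · refine ⟨b, by omega, ?_⟩
        apply hdom2 _ c d hcd
        · show 1 ≤ if c = b then 0 else f c
          rw [if_neg (Ne.symm hbc)]; omega
        · show 1 ≤ if d = b then 0 else f d
          rw [if_neg (Ne.symm hbd)]; omega
      · by_cases hfb : f b = 0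
        · refine ⟨a, by omega, ?_⟩
          apply hdom2 _ c d hcd
          · show 1 ≤ if c = a then 0 else f c
            rw [if_neg (Ne.symm hac)]; omega
          · show 1 ≤ if d = a then 0 else f d
            rw [if_neg (Ne.symm had)]; omega
        · by_cases hfc : f c = 0
          · refine ⟨a, by omega, ?_⟩
            apply hdom2 _ b d hbd
            · show 1 ≤ if b = a then 0 else f b
              rw [if_neg (Ne.symm hab)]; omega
            · show 1 ≤ if d = a then 0 else f d
              rw [if_neg (Ne.symm had)]; omega
          · refine ⟨a, by omega, ?_⟩
            apply hdom2 _ b c hbc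
            · show 1 ≤ if b = a then 0 else f b
              rw [if_neg (Ne.symm hab)]; omega
            · show 1 ≤ if c = a then 0 else f c
              rw [if_neg (Ne.symm hac)]; omega
  obtain ⟨w, hw1, hwdom⟩ := hdel
  apply hmin (fun t => if t = w then 0 else f t) ?_ ?_ ?_ hwdom
  · intro v
    by_cases h : v = w
    · simp [h]
    · simp only [if_neg h]; exact hb v
  · intro v
    by_cases h : v = w
    · simp [h]
    · simp only [if_neg h]; exact le_refl _
  · intro h
    have h9 := congrFun h w
    simp at h9
    omega


/-- For `1 ≤ m ≤ n`, the grid `P_m □ P_n` is diametrical iff `m = 1`, or `m = 2 ∧ n = 2`. -/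
theorem grid_diametrical_iff (m n : ℕ) (hm : 1 ≤ m) (hmn : m ≤ n) :
    upperBroadcast (pathGraph m □ pathGraph n) = gDiam (pathGraph m □ pathGraph n) ↔
      m = 1 ∨ (m = 2 ∧ n = 2) := by
  constructor
  · intro heq
    by_contra hnot
    push_neg at hnot
    obtain ⟨h1, h2⟩ := hnot
    have hm2 : 2 ≤ m := by omega
    have hn2 : n ≠ 2 := by
      intro hn
      exact (h2 (by omega)) hn
    have hn3 : 3 ≤ n := by omega
    have hcon := grid_construction hm2 hn3
    rw [heq, grid_gDiam (by omega) (by omega)] at hcon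
    omega
  · intro h
    have hinst : Nonempty (Fin m × Fin n) :=
      ⟨(⟨0, by omega⟩, ⟨0, by omega⟩)⟩
    have hconn : (pathGraph m □ pathGraph n).Connected :=
      (pathGraph_conn hm).boxProd (pathGraph_conn (by omega))
    rcases h with h1 | ⟨h2, h3⟩
    · subst h1
      apply le_antisymm
      · apply upperBroadcast_le
        intro f hf
        have := path_upper f hf
        rw [grid_gDiam (by omega) (by omega)]
        omega
      · exact gDiam_le_upperBroadcast hconn
    · subst h2; subst h3
      apply le_antisymm
      · apply upperBroadcast_le
        intro f hf
        have := two_two_upper f hf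
        rw [grid_gDiam (by omega) (by omega)]
        omega
      · exact gDiam_le_upperBroadcast hconn
end
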